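/- arXiv:1607.02468 — 5 statements merged into one kernel-verified Lean document; each statement's English description precedes it below -/
import Mathlib

section
/- Let N be a natural number and p a real number with 1 < p < N, let 0 < a < b be reals, set α = (N-p)/(p-1), A = (ab)^α/(b^α - a^α), B = b^α/(b^α - a^α), t(r) = B - A/r^α for r ∈ (a,b), and q(t) = ((p-1)/(N-p))^p · A^{p(p-1)/(N-p)}/(B-t)^{p(N-1)/(N-p)}. Let f : ℝ → ℝ be continuous and let v : ℝ → ℝ be differentiable on (0,1) such that the function φ(s) = |v'(s)|^{p-2} v'(s) is differentiable on (0,1) with φ'(s) = -q(s) f(v(s)) for all s ∈ (0,1). Define u : (a,b) → ℝ by u(r) = v(t(r)). Then u is differentiable on (a,b), the function r ↦ r^{N-1} |u'(r)|^{p-2} u'(r) is differentiable on (a,b), and its derivative equals -r^{N-1} f(u(r)) for every r ∈ (a,b). -/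
/-- Change of variables for `1 < p < N`. With `α = (N-p)/(p-1)`,
`A = (ab)^α/(b^α-a^α)`, `B = b^α/(b^α-a^α)`, `t(r) = B - A/r^α`, and
`q(t) = ((p-1)/(N-p))^p A^(p(p-1)/(N-p))/(B-t)^(p(N-1)/(N-p))`: if `f` is continuous,
`v` is differentiable on `(0,1)` and `s ↦ |v'(s)|^(p-2) v'(s)` is differentiable on `(0,1)`
with derivative `-q(s) f(v(s))`, then `u(r) = v(t(r))` is differentiable on `(a,b)`,
`r ↦ r^(N-1)|u'(r)|^(p-2)u'(r)` is differentiable on `(a,b)`, and its derivative equals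
`-r^(N-1) f(u(r))` there. -/
theorem stmt_6 (N : ℕ) (p a b α A B : ℝ) (hp : 1 < p) (hpN : p < (N : ℝ))
    (ha : 0 < a) (hab : a < b)
    (hα : α = ((N : ℝ) - p) / (p - 1))
    (hA : A = (a * b) ^ α / (b ^ α - a ^ α))
    (hB : B = b ^ α / (b ^ α - a ^ α))
    (tmap q f v u : ℝ → ℝ)
    (htmap : ∀ r, tmap r = B - A / r ^ α)
    (hq : ∀ t, q t = ((p - 1) / ((N : ℝ) - p)) ^ p * A ^ (p * (p - 1) / ((N : ℝ) - p))
      / (B - t) ^ (p * ((N : ℝ) - 1) / ((N : ℝ) - p)))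
    (hf : Continuous f)
    (hv : ∀ s ∈ Set.Ioo (0 : ℝ) 1, DifferentiableAt ℝ v s)
    (hφ : ∀ s ∈ Set.Ioo (0 : ℝ) 1,
      HasDerivAt (fun s => |deriv v s| ^ (p - 2) * deriv v s) (-q s * f (v s)) s)
    (hu : ∀ r, u r = v (tmap r)) :
    (∀ r ∈ Set.Ioo a b, DifferentiableAt ℝ u r) ∧
    ∀ r ∈ Set.Ioo a b,
      HasDerivAt (fun r => r ^ ((N : ℝ) - 1) * (|deriv u r| ^ (p - 2) * deriv u r))
        (-(r ^ ((N : ℝ) - 1)) * f (u r)) r := by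
  have hp1 : (0:ℝ) < p - 1 := by linarith
  have hNp : (0:ℝ) < (N : ℝ) - p := by linarith
  have hα0 : 0 < α := by rw [hα]; positivity
  have hb0 : 0 < b := ha.trans hab
  have haα : (0:ℝ) < a ^ α := Real.rpow_pos_of_pos ha α
  have hbα : (0:ℝ) < b ^ α := Real.rpow_pos_of_pos hb0 α
  have hba : a ^ α < b ^ α := Real.rpow_lt_rpow ha.le hab hα0
  have hden : (0:ℝ) < b ^ α - a ^ α := sub_pos.2 hba
  have hA0 : 0 < A := by
    rw [hA]; exact div_pos (Real.rpow_pos_of_pos (by positivity) α) hden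
  have habα : (a * b) ^ α = a ^ α * b ^ α := Real.mul_rpow ha.le hb0.le
  have htA : B - A / a ^ α = 0 := by
    rw [hA, hB, habα]; field_simp; ring
  have htB : B - A / b ^ α = 1 := by
    rw [hA, hB, habα]; field_simp
  have hαp1 : α * (p - 1) = (N : ℝ) - p := by
    rw [hα]; field_simp
  set c : ℝ := α * A with hc_def
  have hc : 0 < c := mul_pos hα0 hA0
  -- derivative of tmap
  have ht' : ∀ r ∈ Set.Ioo a b, HasDerivAt tmap (c * r ^ (-(α + 1))) r := by
    intro r hr
    have hr0 : 0 < r := ha.trans hr.1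
    have hrα : (0:ℝ) < r ^ α := Real.rpow_pos_of_pos hr0 α
    have h1 : HasDerivAt (fun r : ℝ => r ^ α) (α * r ^ (α - 1)) r :=
      Real.hasDerivAt_rpow_const (Or.inl hr0.ne')
    have h2 : HasDerivAt (fun r : ℝ => B - A / r ^ α)
        (-((0 * r ^ α - A * (α * r ^ (α - 1))) / (r ^ α) ^ 2)) r :=
      ((hasDerivAt_const r A).div h1 hrα.ne').const_sub B
    have heq : tmap = fun r : ℝ => B - A / r ^ α := funext htmap
    rw [heq]
    convert h2 using 1
    have h4 : r ^ (-(α + 1)) * (r ^ α) ^ 2 = r ^ (α - 1) := by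
      rw [sq, ← Real.rpow_add hr0, ← Real.rpow_add hr0]; congr 1; ring
    have hne : ((r : ℝ) ^ α) ^ 2 ≠ 0 := by positivity
    rw [hc_def, ← neg_div, eq_div_iff hne]
    linear_combination α * A * h4
  -- tmap maps (a,b) into (0,1)
  have hmem : ∀ r ∈ Set.Ioo a b, tmap r ∈ Set.Ioo (0:ℝ) 1 := by
    intro r hr
    have hr0 : 0 < r := ha.trans hr.1
    have hrα : (0:ℝ) < r ^ α := Real.rpow_pos_of_pos hr0 α
    have h1 : a ^ α < r ^ α := Real.rpow_lt_rpow ha.le hr.1 hα0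
    have h2 : r ^ α < b ^ α := Real.rpow_lt_rpow hr0.le hr.2 hα0
    constructor
    · have : A / r ^ α < A / a ^ α := div_lt_div_of_pos_left hA0 haα h1
      rw [htmap]; linarith
    · have : A / b ^ α < A / r ^ α := div_lt_div_of_pos_left hA0 hrα h2
      rw [htmap]; linarith
  -- derivative of u
  have huv : u = fun r => v (tmap r) := funext hu
  have hud : ∀ r ∈ Set.Ioo a b,
      HasDerivAt u (deriv v (tmap r) * (c * r ^ (-(α + 1)))) r := by
    intro r hr
    have := ((hv _ (hmem r hr)).hasDerivAt.comp r (ht' r hr))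
    rw [huv]
    exact this
  refine ⟨fun r hr => (hud r hr).differentiableAt, ?_⟩
  intro r hr
  have hr0 : 0 < r := ha.trans hr.1
  -- key pointwise identity
  have keyE : ∀ x ∈ Set.Ioo a b,
      x ^ ((N : ℝ) - 1) * (|deriv u x| ^ (p - 2) * deriv u x)
        = c ^ (p - 1) * (|deriv v (tmap x)| ^ (p - 2) * deriv v (tmap x)) := by
    intro x hx
    have hx0 : 0 < x := ha.trans hx.1
    have hdu : deriv u x = deriv v (tmap x) * (c * x ^ (-(α + 1))) := (hud x hx).deriv
    set d : ℝ := deriv v (tmap x) with hd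
    set w : ℝ := c * x ^ (-(α + 1)) with hw_def
    have hw : 0 < w := mul_pos hc (Real.rpow_pos_of_pos hx0 _)
    have hw1 : x ^ ((N : ℝ) - 1) * (w ^ (p - 2) * w) = c ^ (p - 1) := by
      have e1 : w ^ (p - 2) * w = w ^ (p - 1) := by
        rw [← Real.rpow_add_one hw.ne' (p - 2)]; congr 1; ring
      have e2 : w ^ (p - 1) = c ^ (p - 1) * x ^ (-(α + 1) * (p - 1)) := by
        rw [hw_def, Real.mul_rpow hc.le (Real.rpow_nonneg hx0.le _),
          ← Real.rpow_mul hx0.le]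
      have e3 : x ^ ((N : ℝ) - 1) * x ^ (-(α + 1) * (p - 1)) = 1 := by
        rw [← Real.rpow_add hx0]
        have : (N : ℝ) - 1 + -(α + 1) * (p - 1) = 0 := by nlinarith [hαp1]
        rw [this, Real.rpow_zero]
      calc x ^ ((N : ℝ) - 1) * (w ^ (p - 2) * w)
          = x ^ ((N : ℝ) - 1) * (c ^ (p - 1) * x ^ (-(α + 1) * (p - 1))) := by rw [e1, e2]
        _ = c ^ (p - 1) * (x ^ ((N : ℝ) - 1) * x ^ (-(α + 1) * (p - 1))) := by ring
        _ = c ^ (p - 1) := by rw [e3, mul_one]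
    rw [hdu, abs_mul, abs_of_pos hw, Real.mul_rpow (abs_nonneg d) hw.le]
    linear_combination (|d| ^ (p - 2) * d) * hw1
  -- derivative of the composed φ ∘ tmap times constant
  have h3 := ((hφ _ (hmem r hr)).comp r (ht' r hr)).const_mul (c ^ (p - 1))
  have hEq : (fun x => x ^ ((N : ℝ) - 1) * (|deriv u x| ^ (p - 2) * deriv u x))
      =ᶠ[nhds r] (fun x => c ^ (p - 1)
        * ((fun s => |deriv v s| ^ (p - 2) * deriv v s) ∘ tmap) x) := by
    filter_upwards [Ioo_mem_nhds hr.1 hr.2] with x hx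
    simpa [Function.comp] using keyE x hx
  have h4 := h3.congr_of_eventuallyEq hEq
  convert h4 using 1
  · exact rfl
  · exact rfl
  -- value identity
  set s : ℝ := tmap r with hs
  set e1 : ℝ := p * (p - 1) / ((N : ℝ) - p) with he1
  set e2 : ℝ := p * ((N : ℝ) - 1) / ((N : ℝ) - p) with he2
  have hq' : q s = (α ^ p)⁻¹ * (A ^ e1 * (A ^ e2)⁻¹) * r ^ (α * e2) := by
    rw [hq, hs, htmap]
    have hBt : B - (B - A / r ^ α) = A * r ^ (-α) := by
      rw [Real.rpow_neg hr0.le]; ring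
    rw [hBt, Real.mul_rpow hA0.le (Real.rpow_nonneg hr0.le _), ← Real.rpow_mul hr0.le]
    have h5 : (p - 1) / ((N : ℝ) - p) = α⁻¹ := by rw [hα, inv_div]
    rw [h5, Real.inv_rpow hα0.le]
    have h6 : r ^ (-α * e2) = (r ^ (α * e2))⁻¹ := by
      rw [← Real.rpow_neg hr0.le]; ring_nf
    rw [h6]
    have hAe2 : (0:ℝ) < A ^ e2 := Real.rpow_pos_of_pos hA0 _
    have hre2 : (0:ℝ) < r ^ (α * e2) := Real.rpow_pos_of_pos hr0 _
    field_simp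
  have hc' : c ^ (p - 1) * c = α ^ p * A ^ p := by
    rw [show c ^ (p-1) * c = c ^ ((p-1)+1) from (Real.rpow_add_one hc.ne' (p-1)).symm]
    rw [show (p - 1) + 1 = p by ring, hc_def, Real.mul_rpow hα0.le hA0.le]
  have hA2 : A ^ p * (A ^ e1 * (A ^ e2)⁻¹) = 1 := by
    have : A ^ p * A ^ e1 = A ^ e2 := by
      rw [← Real.rpow_add hA0]; congr 1
      rw [he1, he2]; field_simp; ring
    rw [← mul_assoc, this, mul_inv_cancel₀ (Real.rpow_pos_of_pos hA0 _).ne']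
  have hr2 : r ^ (-(α + 1)) * r ^ (α * e2) = r ^ ((N : ℝ) - 1) := by
    rw [← Real.rpow_add hr0]; congr 1
    rw [he2, hα]; field_simp; ring
  have G : c ^ (p - 1) * (c * r ^ (-(α + 1))) * q s = r ^ ((N : ℝ) - 1) := by
    rw [hq']
    have hrear : c ^ (p - 1) * (c * r ^ (-(α + 1)))
        * ((α ^ p)⁻¹ * (A ^ e1 * (A ^ e2)⁻¹) * r ^ (α * e2))
        = (c ^ (p - 1) * c) * (α ^ p)⁻¹ * (A ^ e1 * (A ^ e2)⁻¹)
          * (r ^ (-(α + 1)) * r ^ (α * e2)) := by ring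
    rw [hrear, hc', hr2]
    have hαp : (0:ℝ) < α ^ p := Real.rpow_pos_of_pos hα0 _
    have : α ^ p * A ^ p * (α ^ p)⁻¹ * (A ^ e1 * (A ^ e2)⁻¹)
        = (α ^ p * (α ^ p)⁻¹) * (A ^ p * (A ^ e1 * (A ^ e2)⁻¹)) := by ring
    rw [this, mul_inv_cancel₀ hαp.ne', hA2, one_mul, one_mul]
  rw [hu r]
  simp only [hc_def] at G ⊢
  linear_combination (f (v (tmap r))) * G
end

section
/- Let N = p > 1 (p a real number which is the space dimension N), let 0 < a < b be reals, set t(r) = ln(r/a)/ln(b/a) for r ∈ (a,b), and q(t) = (a·(b/a)^t · ln(b/a))^p. Let f : ℝ → ℝ be continuous and let v : ℝ → ℝ be differentiable on (0,1) such that the function φ(s) = |v'(s)|^{p-2} v'(s) is differentiable on (0,1) with φ'(s) = -q(s) f(v(s)) for all s ∈ (0,1). Define u : (a,b) → ℝ by u(r) = v(t(r)). Then u is differentiable on (a,b), the function r ↦ r^{p-1} |u'(r)|^{p-2} u'(r) is differentiable on (a,b), and its derivative equals -r^{p-1} f(u(r)) for every r ∈ (a,b). -/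
lemma aux_abs (p c x : ℝ) (hc : 0 < c) :
    |x / c| ^ (p - 2) * (x / c) = |x| ^ (p - 2) * x / c ^ (p - 1) := by
  rcases eq_or_ne x 0 with rfl | hx
  · simp
  · have hax : 0 < |x| := abs_pos.2 hx
    rw [abs_div, abs_of_pos hc, Real.div_rpow hax.le hc.le,
      show p - 1 = (p - 2) + 1 by ring, Real.rpow_add hc, Real.rpow_one]
    have h1 : c ^ (p - 2) ≠ 0 := (Real.rpow_pos_of_pos hc _).ne'
    field_simp

/-- Change of variables in the borderline case `N = p > 1`. With
`t(r) = ln(r/a)/ln(b/a)` and `q(t) = (a·(b/a)^t·ln(b/a))^p`: if `f` is continuous, `v` is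
differentiable on `(0,1)` and `s ↦ |v'(s)|^(p-2) v'(s)` is differentiable on `(0,1)` with
derivative `-q(s) f(v(s))`, then `u(r) = v(t(r))` is differentiable on `(a,b)`,
`r ↦ r^(p-1)|u'(r)|^(p-2)u'(r)` is differentiable on `(a,b)`, and its derivative equals
`-r^(p-1) f(u(r))` there. -/
theorem stmt_7 (p a b : ℝ) (hp : 1 < p) (ha : 0 < a) (hab : a < b)
    (tmap q f v u : ℝ → ℝ)
    (htmap : ∀ r, tmap r = Real.log (r / a) / Real.log (b / a))
    (hq : ∀ t, q t = (a * (b / a) ^ t * Real.log (b / a)) ^ p)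
    (hf : Continuous f)
    (hv : ∀ s ∈ Set.Ioo (0 : ℝ) 1, DifferentiableAt ℝ v s)
    (hφ : ∀ s ∈ Set.Ioo (0 : ℝ) 1,
      HasDerivAt (fun s => |deriv v s| ^ (p - 2) * deriv v s) (-q s * f (v s)) s)
    (hu : ∀ r, u r = v (tmap r)) :
    (∀ r ∈ Set.Ioo a b, DifferentiableAt ℝ u r) ∧
    ∀ r ∈ Set.Ioo a b,
      HasDerivAt (fun r => r ^ (p - 1) * (|deriv u r| ^ (p - 2) * deriv u r))
        (-(r ^ (p - 1)) * f (u r)) r := by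
  set L := Real.log (b / a) with hLdef
  have hba : 1 < b / a := (one_lt_div ha).2 hab
  have hL : 0 < L := Real.log_pos hba
  -- basic facts for any r ∈ Ioo a b
  have hmem : ∀ r ∈ Set.Ioo a b, tmap r ∈ Set.Ioo (0 : ℝ) 1 := by
    intro r hr
    have hr0 : 0 < r := ha.trans hr.1
    have h1 : 0 < Real.log (r / a) := Real.log_pos ((one_lt_div ha).2 hr.1)
    have h2 : Real.log (r / a) < L := by
      apply Real.log_lt_log (by positivity)
      exact div_lt_div_of_pos_right hr.2 ha
    rw [htmap r]
    exact ⟨div_pos h1 hL, (div_lt_one hL).2 h2⟩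
  have htd : ∀ r ∈ Set.Ioo a b, HasDerivAt tmap (1 / (r * L)) r := by
    intro r hr
    have hr0 : 0 < r := ha.trans hr.1
    have h1 : HasDerivAt (fun x : ℝ => x / a) (1 / a) r := by
      simpa using (hasDerivAt_id r).div_const a
    have h2 : HasDerivAt (fun x : ℝ => Real.log (x / a)) ((r / a)⁻¹ * (1 / a)) r :=
      (Real.hasDerivAt_log (by positivity)).comp r h1
    have h3 := h2.div_const L
    have : (r / a)⁻¹ * (1 / a) / L = 1 / (r * L) := by
      field_simp
    rw [this] at h3
    rw [show tmap = fun x => Real.log (x / a) / L from funext htmap]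
    exact h3
  have hud : ∀ r ∈ Set.Ioo a b, HasDerivAt u (deriv v (tmap r) / (r * L)) r := by
    intro r hr
    have h1 : HasDerivAt v (deriv v (tmap r)) (tmap r) :=
      (hv _ (hmem r hr)).hasDerivAt
    have h2 := h1.comp r (htd r hr)
    have : u = v ∘ tmap := funext hu
    rw [this]
    exact h2.congr_deriv (by ring)
  have hru : ∀ r ∈ Set.Ioo a b, a * (b / a) ^ (tmap r) = r := by
    intro r hr
    have hr0 : 0 < r := ha.trans hr.1
    rw [htmap r, Real.rpow_def_of_pos (by positivity : (0:ℝ) < b / a)]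
    rw [← hLdef, show L * (Real.log (r / a) / L) = Real.log (r / a) by
        field_simp,
      Real.exp_log (by positivity : (0:ℝ) < r / a)]
    field_simp
  -- the key pointwise identity
  have hEq : ∀ r ∈ Set.Ioo a b,
      r ^ (p - 1) * (|deriv u r| ^ (p - 2) * deriv u r)
        = (|deriv v (tmap r)| ^ (p - 2) * deriv v (tmap r)) / L ^ (p - 1) := by
    intro r hr
    have hr0 : 0 < r := ha.trans hr.1
    have hd : deriv u r = deriv v (tmap r) / (r * L) := (hud r hr).deriv
    rw [hd, aux_abs p (r * L) (deriv v (tmap r)) (by positivity),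
      Real.mul_rpow hr0.le hL.le]
    have h1 : r ^ (p - 1) ≠ 0 := (Real.rpow_pos_of_pos hr0 _).ne'
    have h2 : L ^ (p - 1) ≠ 0 := (Real.rpow_pos_of_pos hL _).ne'
    field_simp
  refine ⟨fun r hr => (hud r hr).differentiableAt, fun r hr => ?_⟩
  have hr0 : 0 < r := ha.trans hr.1
  -- derivative of φ ∘ tmap
  have h1 := (hφ _ (hmem r hr)).comp r (htd r hr)
  have h2 := h1.div_const (L ^ (p - 1))
  have heqd : -q (tmap r) * f (v (tmap r)) * (1 / (r * L)) / L ^ (p - 1)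
      = -(r ^ (p - 1)) * f (u r) := by
    rw [hq, hru r hr, hu r, Real.mul_rpow hr0.le hL.le,
      show p = 1 + (p - 1) by ring, Real.rpow_add hr0, Real.rpow_add hL,
      Real.rpow_one, Real.rpow_one]
    have h2 : L ^ (p - 1) ≠ 0 := (Real.rpow_pos_of_pos hL _).ne'
    field_simp
    ring
  rw [← heqd]
  apply h2.congr_of_eventuallyEq
  filter_upwards [isOpen_Ioo.mem_nhds hr] with x hx
  exact (hEq x hx)
end

section
/- Let p > 1 be a real number, let f : ℝ → ℝ be continuous, F(ξ) = ∫₀^ξ f(s) ds with F(ξ) ≥ 0 for all ξ ≥ 0, and let q : [0,1] → ℝ be continuous with q(t) ≥ q₀ > 0 for all t ∈ [0,1]. Let t₀ ∈ (0,1), γ > 0 with [t₀-γ, t₀+γ] ⊂ (0,1), μ ∈ (0,1), η > 0, and let w : [0,1] → ℝ be defined by w(t) = 0 if t ∉ (t₀-γ, t₀+γ), w(t) = η if t ∈ (t₀-μγ, t₀+μγ), and w(t) = (η/(γ(1-μ)))(γ - |t-t₀|) otherwise. Then (1/p)∫₀¹ |w'(t)|^p dt - ∫₀¹ q(t) F(w(t))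 dt ≤ 2μγ q₀ · ( η^p / (p γ^p q₀ μ (1-μ)^{p-1}) - F(η) ). -/
open MeasureTheory intervalIntegral Set

private lemma ae_ne_pt (b : ℝ) : ∀ᵐ t : ℝ, t ≠ b := by
  have h : volume ({b} : Set ℝ) = 0 := measure_singleton b
  filter_upwards [measure_eq_zero_iff_ae_notMem.mp h] with t ht
  simpa using ht

private lemma const_on_Ioo_int {h : ℝ → ℝ} {a b d : ℝ} (hab : a ≤ b)
    (H : ∀ t ∈ Set.Ioo a b, h t = d) :
    IntervalIntegrable h volume a b ∧ (∫ t in a..b, h t) = d * (b - a) := by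
  have hae : ∀ᵐ t ∂(volume.restrict (Set.Ioc a b)), h t = d := by
    rw [ae_restrict_iff' measurableSet_Ioc]
    filter_upwards [ae_ne_pt b] with t htb ht
    exact H t ⟨ht.1, lt_of_le_of_ne ht.2 htb⟩
  constructor
  · constructor
    · exact ((integrableOn_const measure_Ioc_lt_top.ne) :
        IntegrableOn (fun _ => d) (Set.Ioc a b) volume).congr (Filter.EventuallyEq.symm hae)
    · rw [Set.Ioc_eq_empty (not_lt.2 hab)]
      exact integrableOn_empty
  · have : (∫ t in a..b, h t) = ∫ _t in a..b, d := by
      apply intervalIntegral.integral_congr_ae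
      filter_upwards [ae_ne_pt b] with t htb ht
      rw [Set.uIoc_of_le hab] at ht
      exact H t ⟨ht.1, lt_of_le_of_ne ht.2 htb⟩
    rw [this, intervalIntegral.integral_const, smul_eq_mul, mul_comm]

/-- Energy estimate for the tent function `w` with plateau of half-width `μγ`
at height `η`: with `F(ξ) = ∫₀^ξ f`, `F ≥ 0` on `[0,∞)`, and `q ≥ q₀ > 0` continuous
on `[0,1]`, one has
`(1/p)∫₀¹|w'|^p - ∫₀¹ q F(w) ≤ 2μγ q₀ (η^p/(p γ^p q₀ μ (1-μ)^(p-1)) - F(η))`. -/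
theorem stmt_12 (p q₀ t₀ γ μ η : ℝ) (hp : 1 < p)
    (f F q : ℝ → ℝ) (hf : Continuous f)
    (hF : ∀ ξ, F ξ = ∫ s in (0 : ℝ)..ξ, f s)
    (hFpos : ∀ ξ : ℝ, 0 ≤ ξ → 0 ≤ F ξ)
    (hqc : ContinuousOn q (Set.Icc 0 1))
    (hq₀ : 0 < q₀) (hq : ∀ t ∈ Set.Icc (0 : ℝ) 1, q₀ ≤ q t)
    (ht₀ : t₀ ∈ Set.Ioo (0 : ℝ) 1) (hγ : 0 < γ)
    (hsub : Set.Icc (t₀ - γ) (t₀ + γ) ⊆ Set.Ioo (0 : ℝ) 1)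
    (hμ : μ ∈ Set.Ioo (0 : ℝ) 1) (hη : 0 < η)
    (w : ℝ → ℝ)
    (hw0 : ∀ t, t ∉ Set.Ioo (t₀ - γ) (t₀ + γ) → w t = 0)
    (hw1 : ∀ t, t ∈ Set.Ioo (t₀ - μ * γ) (t₀ + μ * γ) → w t = η)
    (hw2 : ∀ t, t ∈ Set.Ioo (t₀ - γ) (t₀ + γ) → t ∉ Set.Ioo (t₀ - μ * γ) (t₀ + μ * γ) →
      w t = (η / (γ * (1 - μ))) * (γ - |t - t₀|)) :
    (1 / p) * (∫ t in (0 : ℝ)..1, |deriv w t| ^ p) - ∫ t in (0 : ℝ)..1, q t * F (w t)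
      ≤ 2 * μ * γ * q₀ * (η ^ p / (p * γ ^ p * q₀ * μ * (1 - μ) ^ (p - 1)) - F η) := by
  obtain ⟨hμ0, hμ1⟩ := hμ
  have hK : (0:ℝ) < 1 - μ := by linarith
  have hμγ : μ * γ < γ := by nlinarith
  have hμγ0 : 0 < μ * γ := mul_pos hμ0 hγ
  set a1 := t₀ - γ with ha1
  set a2 := t₀ - μ * γ with ha2
  set a3 := t₀ + μ * γ with ha3
  set a4 := t₀ + γ with ha4
  have h12 : a1 < a2 := by simp only [ha1, ha2]; linarith
  have h23 : a2 < a3 := by simp only [ha2, ha3]; linarith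
  have h34 : a3 < a4 := by simp only [ha3, ha4]; linarith
  have hm1 : a1 ∈ Set.Ioo (0:ℝ) 1 := hsub ⟨le_refl _, by linarith⟩
  have hm4 : a4 ∈ Set.Ioo (0:ℝ) 1 := hsub ⟨by linarith, le_refl _⟩
  have h0a1 : (0:ℝ) < a1 := hm1.1
  have ha41 : a4 < 1 := hm4.2
  set c := η / (γ * (1 - μ)) with hc_def
  have hγK : 0 < γ * (1 - μ) := mul_pos hγ hK
  have hc : 0 < c := div_pos hη hγK
  have hp0 : (0:ℝ) < p := by linarith
  -- w bounds
  have hwmem : ∀ t, w t ∈ Set.Icc (0:ℝ) η := by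
    intro t
    by_cases h1 : t ∈ Set.Ioo a2 a3
    · rw [hw1 t h1]; exact ⟨hη.le, le_refl _⟩
    by_cases h2 : t ∈ Set.Ioo a1 a4
    · rw [hw2 t h2 h1]
      have habs : |t - t₀| < γ := abs_lt.2 ⟨by simp only [ha1] at h2; linarith [h2.1], by simp only [ha4] at h2; linarith [h2.2]⟩
      have habs2 : μ * γ ≤ |t - t₀| := by
        rcases le_or_gt t a2 with h | h
        · exact le_abs.2 (Or.inr (by simp only [ha2] at h; linarith))
        · have h3 : a3 ≤ t := by
            by_contra hlt
            push_neg at hlt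
            exact h1 ⟨h, hlt⟩
          exact le_abs.2 (Or.inl (by simp only [ha3] at h3; linarith))
      constructor
      · exact mul_nonneg hc.le (by linarith)
      · have : c * (γ - |t - t₀|) ≤ c * (γ - μ * γ) :=
          mul_le_mul_of_nonneg_left (by linarith) hc.le
        have he : c * (γ - μ * γ) = η := by
          rw [hc_def, div_mul_eq_mul_div, div_eq_iff hγK.ne']; ring
        linarith
    · rw [hw0 t h2]; exact ⟨le_refl _, hη.le⟩
  -- derivative values
  have d1 : ∀ t ∈ Set.Ioo a1 a2, deriv w t = c := by
    intro t ht
    have hev : w =ᶠ[nhds t] (fun s => c * (s - a1)) := by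
      filter_upwards [isOpen_Ioo.mem_nhds ht] with s hs
      have hs4 : s ∈ Set.Ioo a1 a4 := ⟨hs.1, by linarith [hs.2, h23, h34]⟩
      have hs23 : s ∉ Set.Ioo a2 a3 := fun h => absurd hs.2 (not_lt.2 h.1.le)
      rw [hw2 s hs4 hs23]
      have : |s - t₀| = t₀ - s := by
        rw [abs_of_neg (by simp only [ha2] at hs; linarith [hs.2])]; ring
      rw [this, hc_def, ha1]; ring
    rw [hev.deriv_eq]
    exact (((hasDerivAt_id t).sub_const a1).const_mul c).deriv.trans (mul_one c)
  have d3 : ∀ t ∈ Set.Ioo a3 a4, deriv w t = -c := by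
    intro t ht
    have hev : w =ᶠ[nhds t] (fun s => c * (a4 - s)) := by
      filter_upwards [isOpen_Ioo.mem_nhds ht] with s hs
      have hs4 : s ∈ Set.Ioo a1 a4 := ⟨by linarith [hs.1, h12, h23], hs.2⟩
      have hs23 : s ∉ Set.Ioo a2 a3 := fun h => absurd hs.1 (not_lt.2 h.2.le)
      rw [hw2 s hs4 hs23]
      have : |s - t₀| = s - t₀ := by
        rw [abs_of_pos (by simp only [ha3] at hs; linarith [hs.1])]
      rw [this, hc_def, ha4]; ring
    rw [hev.deriv_eq]
    have : HasDerivAt (fun s => c * (a4 - s)) (c * (0 - 1)) t :=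
      (((hasDerivAt_const t a4).sub (hasDerivAt_id t))).const_mul c
    rw [this.deriv]; ring
  have d2 : ∀ t ∈ Set.Ioo a2 a3, deriv w t = 0 := by
    intro t ht
    have hev : w =ᶠ[nhds t] (fun _ => η) := by
      filter_upwards [isOpen_Ioo.mem_nhds ht] with s hs
      exact hw1 s hs
    rw [hev.deriv_eq, deriv_const]
  have d0l : ∀ t ∈ Set.Ioo (0:ℝ) a1, deriv w t = 0 := by
    intro t ht
    have hev : w =ᶠ[nhds t] (fun _ => (0:ℝ)) := by
      filter_upwards [(isOpen_Iio).mem_nhds (show t ∈ Set.Iio a1 from ht.2)] with s hs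
      exact hw0 s (fun h => absurd h.1 (not_lt.2 (le_of_lt hs)))
    rw [hev.deriv_eq, deriv_const]
  have d0r : ∀ t ∈ Set.Ioo a4 (1:ℝ), deriv w t = 0 := by
    intro t ht
    have hev : w =ᶠ[nhds t] (fun _ => (0:ℝ)) := by
      filter_upwards [(isOpen_Ioi).mem_nhds (show t ∈ Set.Ioi a4 from ht.1)] with s hs
      exact hw0 s (fun h => absurd h.2 (not_lt.2 (le_of_lt hs)))
    rw [hev.deriv_eq, deriv_const]
  -- integral of |deriv w|^p
  set Φ : ℝ → ℝ := fun t => |deriv w t| ^ p with hΦ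
  have hzero : |(0:ℝ)| ^ p = 0 := by
    rw [abs_zero, Real.zero_rpow hp0.ne']
  have P1 := const_on_Ioo_int (h := Φ) (le_of_lt h0a1)
    (fun t ht => by simp only [hΦ]; rw [d0l t ht, hzero])
  have P2 := const_on_Ioo_int (h := Φ) h12.le
    (fun t ht => by simp only [hΦ]; rw [d1 t ht, abs_of_pos hc])
  have P3 := const_on_Ioo_int (h := Φ) h23.le
    (fun t ht => by simp only [hΦ]; rw [d2 t ht, hzero])
  have P4 := const_on_Ioo_int (h := Φ) h34.le
    (fun t ht => by simp only [hΦ]; rw [d3 t ht, abs_neg, abs_of_pos hc])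
  have P5 := const_on_Ioo_int (h := Φ) (le_of_lt ha41)
    (fun t ht => by simp only [hΦ]; rw [d0r t ht, hzero])
  have hΦint : (∫ t in (0:ℝ)..1, Φ t) = c ^ p * (a2 - a1) + c ^ p * (a4 - a3) := by
    have e1 := intervalIntegral.integral_add_adjacent_intervals P4.1 P5.1
    have e2 := intervalIntegral.integral_add_adjacent_intervals P3.1 (P4.1.trans P5.1)
    have e3 := intervalIntegral.integral_add_adjacent_intervals P2.1 (P3.1.trans (P4.1.trans P5.1))
    have e4 := intervalIntegral.integral_add_adjacent_intervals P1.1 (P2.1.trans (P3.1.trans (P4.1.trans P5.1)))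
    rw [← e4, ← e3, ← e2, ← e1, P1.2, P2.2, P3.2, P4.2, P5.2]
    ring
  -- value of (1/p) * ∫ Φ
  have hγp : (0:ℝ) < γ ^ p := Real.rpow_pos_of_pos hγ p
  have hKp1 : (0:ℝ) < (1 - μ) ^ (p - 1) := Real.rpow_pos_of_pos hK (p - 1)
  have hcp : c ^ p = η ^ p / (γ ^ p * (1 - μ) ^ p) := by
    rw [hc_def, Real.div_rpow hη.le hγK.le, Real.mul_rpow hγ.le hK.le]
  have hKp : (1 - μ) ^ p = (1 - μ) ^ (p - 1) * (1 - μ) := by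
    rw [← Real.rpow_add_one hK.ne' (p - 1)]; ring_nf
  have hclaim : (1 / p) * (∫ t in (0:ℝ)..1, Φ t)
      = 2 * μ * γ * q₀ * (η ^ p / (p * γ ^ p * q₀ * μ * (1 - μ) ^ (p - 1))) := by
    rw [hΦint, hcp, hKp, ha1, ha2, ha3, ha4]
    field_simp
    ring
  -- continuity of F
  have hFc : Continuous F := by
    have : F = fun ξ => ∫ s in (0:ℝ)..ξ, f s := funext hF
    rw [this]
    exact intervalIntegral.continuous_primitive (fun a b => hf.intervalIntegrable a b) 0
  -- measurability of w
  have hWeq : w = fun t => if t ∈ Set.Ioo a2 a3 then η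
      else if t ∈ Set.Ioo a1 a4 then c * (γ - |t - t₀|) else 0 := by
    funext t
    by_cases h1 : t ∈ Set.Ioo a2 a3
    · simp only [h1, if_true]; exact hw1 t h1
    by_cases h2 : t ∈ Set.Ioo a1 a4
    · simp only [h1, h2, if_false, if_true]; exact hw2 t h2 h1
    · simp only [h1, h2, if_false]; exact hw0 t h2
  have hmw : Measurable w := by
    rw [hWeq]
    exact Measurable.ite measurableSet_Ioo measurable_const
      (Measurable.ite measurableSet_Ioo (by fun_prop) measurable_const)
  -- integrability of G := q * F ∘ w on [0,1]
  set G : ℝ → ℝ := fun t => q t * F (w t) with hG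
  obtain ⟨Cq, hCq⟩ := isCompact_Icc.exists_bound_of_continuousOn hqc
  obtain ⟨CF, hCF⟩ := isCompact_Icc.exists_bound_of_continuousOn (hFc.continuousOn (s := Set.Icc 0 η))
  have hGint : IntegrableOn G (Set.Icc (0:ℝ) 1) volume := by
    constructor
    · exact ((hqc.aemeasurable measurableSet_Icc).mul
        ((hFc.measurable.comp hmw).aemeasurable)).aestronglyMeasurable
    · apply HasFiniteIntegral.restrict_of_bounded (C := Cq * CF) measure_Icc_lt_top
      rw [ae_restrict_iff' measurableSet_Icc]
      filter_upwards with t ht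
      have h1 : ‖q t‖ ≤ Cq := hCq t ht
      have h2 : ‖F (w t)‖ ≤ CF := hCF (w t) (hwmem t)
      calc ‖q t * F (w t)‖ = ‖q t‖ * ‖F (w t)‖ := norm_mul _ _
        _ ≤ Cq * CF := mul_le_mul h1 h2 (norm_nonneg _) ((norm_nonneg _).trans h1)
  have hGii : ∀ x y : ℝ, 0 ≤ x → x ≤ y → y ≤ 1 → IntervalIntegrable G volume x y := by
    intro x y hx hxy hy
    apply IntegrableOn.intervalIntegrable
    apply hGint.mono_set
    rw [Set.uIcc_of_le hxy]
    exact Set.Icc_subset_Icc hx hy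
  have h0a2 : (0:ℝ) ≤ a2 := by linarith
  have ha31 : a3 ≤ 1 := by linarith
  have hGsplit : (∫ t in (0:ℝ)..1, G t)
      = (∫ t in (0:ℝ)..a2, G t) + ((∫ t in a2..a3, G t) + (∫ t in a3..(1:ℝ), G t)) := by
    rw [intervalIntegral.integral_add_adjacent_intervals (hGii a2 a3 h0a2 h23.le ha31)
      (hGii a3 1 (by linarith) ha31 le_rfl),
      intervalIntegral.integral_add_adjacent_intervals (hGii 0 a2 le_rfl h0a2 (by linarith))
      (hGii a2 1 h0a2 (by linarith) le_rfl)]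
  have hGnn : ∀ u ∈ Set.Icc (0:ℝ) 1, 0 ≤ G u := by
    intro u hu
    exact mul_nonneg (hq₀.le.trans (hq u hu)) (hFpos _ (hwmem u).1)
  have hleft : 0 ≤ ∫ t in (0:ℝ)..a2, G t :=
    intervalIntegral.integral_nonneg h0a2 (fun u hu => hGnn u ⟨hu.1, hu.2.trans (by linarith)⟩)
  have hright : 0 ≤ ∫ t in a3..(1:ℝ), G t :=
    intervalIntegral.integral_nonneg (by linarith) (fun u hu => hGnn u ⟨(by linarith [hu.1] : (0:ℝ) ≤ u), hu.2⟩)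
  -- middle
  have hwη : ∀ t ∈ Set.Icc a2 a3, w t = η := by
    intro t ht
    by_cases h1 : t ∈ Set.Ioo a2 a3
    · exact hw1 t h1
    · have ht4 : t ∈ Set.Ioo a1 a4 := ⟨by linarith [ht.1], by linarith [ht.2]⟩
      rw [hw2 t ht4 h1]
      have : |t - t₀| = μ * γ := by
        rcases not_and_or.1 (by simpa [Set.mem_Ioo] using h1 : ¬(a2 < t ∧ t < a3)) with h | h
        · push_neg at h
          have : t = a2 := le_antisymm h ht.1
          rw [this, ha2, abs_of_nonpos (by linarith)]; ring
        · push_neg at h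
          have : t = a3 := le_antisymm ht.2 h
          rw [this, ha3, abs_of_nonneg (by linarith)]; ring
      rw [this, hc_def, div_mul_eq_mul_div, div_eq_iff hγK.ne']; ring
  have hmid : 2 * μ * γ * q₀ * F η ≤ ∫ t in a2..a3, G t := by
    have hcongr : (∫ t in a2..a3, G t) = ∫ t in a2..a3, q t * F η := by
      apply intervalIntegral.integral_congr
      intro t ht
      rw [Set.uIcc_of_le h23.le] at ht
      simp only [hG]
      rw [hwη t ht]
    have hqiint : IntervalIntegrable q volume a2 a3 := by
      apply ContinuousOn.intervalIntegrable
      apply hqc.mono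
      rw [Set.uIcc_of_le h23.le]
      exact Set.Icc_subset_Icc h0a2 ha31
    have hqlow : q₀ * (a3 - a2) ≤ ∫ t in a2..a3, q t := by
      have := intervalIntegral.integral_mono_on h23.le
        (_root_.intervalIntegrable_const (c := q₀)) hqiint
        (fun x hx => hq x ⟨by linarith [hx.1], by linarith [hx.2]⟩)
      rwa [intervalIntegral.integral_const, smul_eq_mul, mul_comm] at this
    have hmul : (∫ t in a2..a3, q t * F η) = (∫ t in a2..a3, q t) * F η :=
      intervalIntegral.integral_mul_const (F η) q
    have hFη : 0 ≤ F η := hFpos η hη.le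
    rw [hcongr, hmul]
    calc 2 * μ * γ * q₀ * F η = (q₀ * (a3 - a2)) * F η := by rw [ha2, ha3]; ring
      _ ≤ (∫ t in a2..a3, q t) * F η := mul_le_mul_of_nonneg_right hqlow hFη
  -- combine
  have hB : 2 * μ * γ * q₀ * F η ≤ ∫ t in (0:ℝ)..1, G t := by
    rw [hGsplit]; linarith
  rw [mul_sub]
  have hgoal1 : (1 / p) * (∫ t in (0:ℝ)..1, |deriv w t| ^ p)
      = 2 * μ * γ * q₀ * (η ^ p / (p * γ ^ p * q₀ * μ * (1 - μ) ^ (p - 1))) := hclaim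
  linarith [hB, hgoal1]
end

section
/- Let p > 1 be a real number, let q : [0,1] → ℝ be continuous with q(t) ≥ q₀ > 0 for all t ∈ [0,1], and let f : ℝ → ℝ be continuous with f(x) = 0 for x < 0, F(ξ) = ∫₀^ξ f(s) ds, and F(ξ) ≥ 0 for all ξ ≥ 0. Set σ(p,q₀) = inf_{μ ∈ (0,1)} 1/(q₀ μ (1-μ)^{p-1}) and suppose limsup_{ξ → +∞} F(ξ)/ξ^p > σ(p,q₀) / (p · (1/2)^p). Then the energy functional is unbounded below on Lipschitz functions vanishing at the endpoints: for every M > 0 there exists a Lipschitz function w : [0,1] → ℝ with w(0) = w(1) = 0, differentiable at all but finitely many points, such that (1/p)∫₀¹ |w'(t)|^p dt - ∫₀¹ q(t) F(w(t)) dt < -M. -/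
open MeasureTheory Set Filter intervalIntegral

set_option maxHeartbeats 1000000


/-- Under condition (iii) of Theorem 1.1 (with
`sup_{t∈(0,1)} dist(t,{0,1}) = 1/2`), the energy functional
`w ↦ (1/p)∫₀¹|w'|^p - ∫₀¹ q F(w)` is unbounded below on Lipschitz functions vanishing
at the endpoints of `[0,1]`. -/
theorem stmt_13 (p q₀ : ℝ) (hp : 1 < p) (hq₀ : 0 < q₀)
    (q f F : ℝ → ℝ)
    (hqc : ContinuousOn q (Set.Icc 0 1))
    (hq : ∀ t ∈ Set.Icc (0 : ℝ) 1, q₀ ≤ q t)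
    (hf : Continuous f) (hfneg : ∀ x < (0 : ℝ), f x = 0)
    (hF : ∀ ξ, F ξ = ∫ s in (0 : ℝ)..ξ, f s)
    (hFpos : ∀ ξ : ℝ, 0 ≤ ξ → 0 ≤ F ξ)
    (σpq : ℝ)
    (hσ : σpq = sInf ((fun μ : ℝ => 1 / (q₀ * μ * (1 - μ) ^ (p - 1))) '' Set.Ioo 0 1))
    (hlimsup : (↑(σpq / (p * (1 / 2 : ℝ) ^ p)) : EReal)
      < Filter.limsup (fun ξ : ℝ => ((F ξ / ξ ^ p : ℝ) : EReal)) Filter.atTop) :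
    ∀ M > (0 : ℝ), ∃ w : ℝ → ℝ,
      (∃ K : NNReal, LipschitzWith K w) ∧ w 0 = 0 ∧ w 1 = 0 ∧
      (∃ S : Finset ℝ, ∀ t ∉ S, DifferentiableAt ℝ w t) ∧
      (1 / p) * (∫ t in (0 : ℝ)..1, |deriv w t| ^ p)
        - (∫ t in (0 : ℝ)..1, q t * F (w t)) < -M := by
  intro M hM
  have hp0 : (0:ℝ) < p := lt_trans one_pos hp
  -- pick r strictly between threshold and limsup
  obtain ⟨r, hcr, hrlim⟩ := EReal.lt_iff_exists_real_btwn.mp hlimsup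
  have hcr' : σpq / (p * (1/2:ℝ)^p) < r := by exact_mod_cast hcr
  have hfreq : ∃ᶠ ξ : ℝ in atTop, r < F ξ / ξ ^ p := by
    have h := Filter.frequently_lt_of_lt_limsup
      (u := fun ξ : ℝ => ((F ξ / ξ ^ p : ℝ) : EReal)) (h := hrlim)
    refine h.mono fun ξ hξ => ?_
    exact_mod_cast hξ
  have hhalf : (0:ℝ) < (1/2:ℝ)^p := Real.rpow_pos_of_pos (by norm_num) p
  have hden : (0:ℝ) < p * (1/2:ℝ)^p := mul_pos hp0 hhalf
  -- pick μ
  have hσlt : σpq < r * (p * (1/2:ℝ)^p) := (div_lt_iff₀ hden).mp hcr'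
  rw [hσ] at hσlt
  have hbdd : BddBelow ((fun μ : ℝ => 1 / (q₀ * μ * (1 - μ) ^ (p - 1))) '' Set.Ioo 0 1) := by
    refine ⟨0, fun y hy => ?_⟩
    obtain ⟨μ, hμ, rfl⟩ := hy
    have : 0 < q₀ * μ * (1 - μ) ^ (p - 1) :=
      mul_pos (mul_pos hq₀ hμ.1) (Real.rpow_pos_of_pos (by linarith [hμ.2]) _)
    positivity
  have hne : ((fun μ : ℝ => 1 / (q₀ * μ * (1 - μ) ^ (p - 1))) '' Set.Ioo 0 1).Nonempty :=
    ⟨_, ⟨(1/2 : ℝ), by norm_num, rfl⟩⟩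
  obtain ⟨y, hy, hylt⟩ := (csInf_lt_iff hbdd hne).mp hσlt
  obtain ⟨μ, hμ, rfl⟩ := hy
  obtain ⟨hμ0, hμ1⟩ := hμ
  have h1μ : (0:ℝ) < 1 - μ := by linarith
  have hA : (0:ℝ) < (1 - μ) ^ (p - 1) := Real.rpow_pos_of_pos h1μ _
  have hd : (0:ℝ) < q₀ * μ * (1 - μ) ^ (p - 1) := mul_pos (mul_pos hq₀ hμ0) hA
  -- r > 0
  have hr0 : (0:ℝ) < r := by
    have h1 : (0:ℝ) < 1 / (q₀ * μ * (1 - μ) ^ (p - 1)) := by positivity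
    nlinarith [hylt, hden]
  -- the geometric parameter a
  set a : ℝ := (1 - μ)/2 with ha_def
  have ha0 : (0:ℝ) < a := by simp only [ha_def]; linarith
  have ha2 : a < 1/2 := by simp only [ha_def]; linarith
  have haa : a < 1 - a := by linarith
  have ha1 : a < 1 := by linarith
  -- key inequality : (2/p) * a^(1-p) < q₀ * μ * r
  have hkey : (2/p) * a ^ (1 - p) < q₀ * μ * r := by
    have h1 : (1:ℝ) < r * (p * (1/2:ℝ)^p) * (q₀ * μ * (1 - μ) ^ (p - 1)) := by
      rw [div_lt_iff₀ hd] at hylt; linarith [hylt]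
    have hAA : (1 - μ) ^ (1 - p) * (1 - μ) ^ (p - 1) = 1 := by
      rw [← Real.rpow_add h1μ]; norm_num
    have hBB : ((1/2:ℝ)) ^ (1 - p) * (1/2:ℝ) ^ p = 1/2 := by
      rw [← Real.rpow_add (by norm_num : (0:ℝ) < 1/2)]
      norm_num
    have ha_eq : a ^ (1 - p) = (1 - μ) ^ (1 - p) * (1/2:ℝ) ^ (1 - p) := by
      rw [ha_def, div_eq_mul_one_div (1 - μ) 2, Real.mul_rpow h1μ.le (by norm_num)]
    have hA' : (0:ℝ) < (1 - μ) ^ (1 - p) := Real.rpow_pos_of_pos h1μ _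
    have hB' : (0:ℝ) < ((1/2:ℝ)) ^ (1 - p) := Real.rpow_pos_of_pos (by norm_num) _
    rw [ha_eq]
    have hpos : (0:ℝ) < (1 - μ) ^ (1 - p) * (1/2:ℝ) ^ (1 - p) * (2/p) := by positivity
    calc (2/p) * ((1 - μ) ^ (1 - p) * (1/2:ℝ) ^ (1 - p))
        = 1 * ((1 - μ) ^ (1 - p) * (1/2:ℝ) ^ (1 - p) * (2/p)) := by ring
      _ < (r * (p * (1/2:ℝ)^p) * (q₀ * μ * (1 - μ) ^ (p - 1)))
            * ((1 - μ) ^ (1 - p) * (1/2:ℝ) ^ (1 - p) * (2/p)) :=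
          mul_lt_mul_of_pos_right h1 hpos
      _ = q₀ * μ * r * (((1 - μ) ^ (1 - p) * (1 - μ) ^ (p - 1)) *
            (((1/2:ℝ)) ^ (1 - p) * (1/2:ℝ) ^ p * 2) * (p / p)) := by ring
      _ = q₀ * μ * r := by
          rw [hAA, hBB, div_self hp0.ne']; ring
  set ε : ℝ := q₀ * μ * r - (2/p) * a ^ (1 - p) with hε_def
  have hε : 0 < ε := by simp only [hε_def]; linarith
  -- choose ξ
  obtain ⟨ξ, hξB, hξr⟩ := Filter.frequently_atTop.mp hfreq (max 1 ((M/ε + 1) ^ (p⁻¹)))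
  have hξ1 : (1:ℝ) ≤ ξ := le_trans (le_max_left _ _) hξB
  have hξ0 : (0:ℝ) < ξ := lt_of_lt_of_le one_pos hξ1
  have hξppos : (0:ℝ) < ξ ^ p := Real.rpow_pos_of_pos hξ0 _
  have hξp : M/ε < ξ ^ p := by
    have h1 : ((M/ε + 1) ^ (p⁻¹)) ^ p ≤ ξ ^ p := by
      refine Real.rpow_le_rpow (Real.rpow_nonneg (by positivity) _)
        (le_trans (le_max_right _ _) hξB) hp0.le
    have h2 : ((M/ε + 1) ^ (p⁻¹)) ^ p = M/ε + 1 := by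
      rw [← Real.rpow_mul (by positivity : (0:ℝ) ≤ M/ε + 1), inv_mul_cancel₀ hp0.ne',
        Real.rpow_one]
    nlinarith [h1, h2]
  have hFξ : r * ξ ^ p < F ξ := (lt_div_iff₀ hξppos).mp hξr
  have hFξ0 : 0 ≤ F ξ := hFpos ξ (by linarith)
  -- the test function
  set c : ℝ := ξ / a with hc_def
  have hc0 : (0:ℝ) < c := div_pos hξ0 ha0
  have hca : c * a = ξ := by rw [hc_def, div_mul_cancel₀ ξ ha0.ne']
  set w : ℝ → ℝ := fun t => c * min (min t a) (1 - t) with hw_def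
  -- Lipschitz
  have hg : LipschitzWith 1 (fun t : ℝ => min (min t a) (1 - t)) := by
    have h1 : LipschitzWith 1 (fun t : ℝ => min t a) := by
      simpa using LipschitzWith.id.min (LipschitzWith.const a)
    have h2 : LipschitzWith 1 (fun t : ℝ => 1 - t) := by
      simpa using (LipschitzWith.const (α := ℝ) (1:ℝ)).sub LipschitzWith.id
    simpa using h1.min h2
  have hlip : LipschitzWith (‖c‖₊ * 1) w := (lipschitzWith_smul c).comp hg
  -- boundary values
  have hw0 : w 0 = 0 := by simp [hw_def, min_eq_left ha0.le, min_eq_left, ha1.le]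
  have hw1 : w 1 = 0 := by
    have hmin : min (min (1:ℝ) a) (1 - 1) = 0 := by
      rw [min_eq_right (by rw [le_min_iff]; constructor <;> linarith : (1:ℝ) - 1 ≤ min 1 a)]
      norm_num
    simp only [hw_def]
    rw [hmin, mul_zero]
  -- local formulas
  have hwl : ∀ t : ℝ, t < a → w =ᶠ[nhds t] (fun s => c * s) := by
    intro t ht
    filter_upwards [Iio_mem_nhds ht] with s hs
    have h1 : min s a = s := min_eq_left (le_of_lt hs)
    have h2 : min s (1 - s) = s := min_eq_left (by simp only [mem_Iio] at hs; linarith)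
    simp only [hw_def]
    rw [h1, h2]
  have hwm : ∀ t : ℝ, a < t → t < 1 - a → w =ᶠ[nhds t] (fun _ => ξ) := by
    intro t ht1 ht2
    filter_upwards [Ioo_mem_nhds ht1 ht2] with s hs
    have h1 : min s a = a := min_eq_right hs.1.le
    have h2 : min a (1 - s) = a := min_eq_left (by obtain ⟨_, h⟩ := hs; linarith)
    simp only [hw_def]
    rw [h1, h2, hca]
  have hwr : ∀ t : ℝ, 1 - a < t → w =ᶠ[nhds t] (fun s => c * (1 - s)) := by
    intro t ht
    filter_upwards [Ioi_mem_nhds ht] with s hs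
    simp only [mem_Ioi] at hs
    have h1 : min s a = a := min_eq_right (by linarith)
    have h2 : min a (1 - s) = 1 - s := min_eq_right (by linarith)
    simp only [hw_def]
    rw [h1, h2]
  -- derivative values
  have hdl : ∀ t : ℝ, t < a → deriv w t = c := by
    intro t ht
    rw [Filter.EventuallyEq.deriv_eq (hwl t ht)]
    simpa using ((hasDerivAt_id t).const_mul c).deriv
  have hdm : ∀ t : ℝ, a < t → t < 1 - a → deriv w t = 0 := by
    intro t ht1 ht2
    rw [Filter.EventuallyEq.deriv_eq (hwm t ht1 ht2)]
    exact deriv_const t ξ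
  have hdr : ∀ t : ℝ, 1 - a < t → deriv w t = -c := by
    intro t ht
    rw [Filter.EventuallyEq.deriv_eq (hwr t ht)]
    have : HasDerivAt (fun s : ℝ => c * (1 - s)) (c * (-1)) t :=
      ((hasDerivAt_id t).const_sub 1).const_mul c
    simpa using this.deriv
  -- differentiability off {a, 1-a}
  have hdiff : ∀ t : ℝ, t ≠ a → t ≠ 1 - a → DifferentiableAt ℝ w t := by
    intro t h1 h2
    rcases lt_trichotomy t a with h | h | h
    · exact ((hwl t h).differentiableAt_iff).mpr (differentiableAt_id.const_mul c)
    · exact absurd h h1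
    · rcases lt_trichotomy t (1 - a) with h' | h' | h'
      · exact ((hwm t h h').differentiableAt_iff).mpr (differentiableAt_const ξ)
      · exact absurd h' h2
      · exact ((hwr t h').differentiableAt_iff).mpr
          (((differentiableAt_const (1:ℝ)).sub differentiableAt_id).const_mul c)
  -- a.e. avoidance of kinks
  have hae : ∀ᵐ t : ℝ, t ≠ a ∧ t ≠ 1 - a := by
    have hz : (volume : Measure ℝ) {a, 1 - a} = 0 :=
      ((Set.finite_singleton (1 - a)).insert a).measure_zero _
    have := measure_eq_zero_iff_ae_notMem.mp hz
    filter_upwards [this] with x hx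
    simp only [Set.mem_insert_iff, Set.mem_singleton_iff] at hx
    push_neg at hx
    exact hx
  -- the integrand of the gradient term
  set G : ℝ → ℝ := fun t => |deriv w t| ^ p with hG_def
  have hcp : (0:ℝ) ≤ c ^ p := (Real.rpow_pos_of_pos hc0 p).le
  -- piece 1
  have hae1 : ∀ᵐ t : ℝ, t ∈ Set.uIoc (0:ℝ) a → G t = c ^ p := by
    filter_upwards [hae] with t ht hmem
    rw [Set.uIoc_of_le ha0.le] at hmem
    have htlt : t < a := lt_of_le_of_ne hmem.2 ht.1
    simp only [hG_def]
    rw [hdl t htlt, abs_of_pos hc0]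
  have hint1 : IntervalIntegrable G volume 0 a := by
    apply (_root_.intervalIntegrable_const (c := c ^ p)).congr_ae
    filter_upwards [ae_restrict_of_ae hae1, self_mem_ae_restrict measurableSet_uIoc] with
      t h1 h2
    exact (h1 h2).symm
  have hval1 : ∫ t in (0:ℝ)..a, G t = a * c ^ p := by
    rw [intervalIntegral.integral_congr_ae hae1, intervalIntegral.integral_const]
    simp
  -- piece 2
  have hae2 : ∀ᵐ t : ℝ, t ∈ Set.uIoc a (1 - a) → G t = 0 := by
    filter_upwards [hae] with t ht hmem
    rw [Set.uIoc_of_le haa.le] at hmem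
    have htlt : t < 1 - a := lt_of_le_of_ne hmem.2 ht.2
    simp only [hG_def]
    rw [hdm t hmem.1 htlt, abs_zero, Real.zero_rpow hp0.ne']
  have hint2 : IntervalIntegrable G volume a (1 - a) := by
    apply (_root_.intervalIntegrable_const (c := (0:ℝ))).congr_ae
    filter_upwards [ae_restrict_of_ae hae2, self_mem_ae_restrict measurableSet_uIoc] with
      t h1 h2
    exact (h1 h2).symm
  have hval2 : ∫ t in a..(1 - a), G t = 0 := by
    rw [intervalIntegral.integral_congr_ae hae2, intervalIntegral.integral_const]
    simp
  -- piece 3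
  have hae3 : ∀ᵐ t : ℝ, t ∈ Set.uIoc (1 - a) 1 → G t = c ^ p := by
    filter_upwards [] with t hmem
    rw [Set.uIoc_of_le (by linarith : 1 - a ≤ 1)] at hmem
    simp only [hG_def]
    rw [hdr t hmem.1, abs_neg, abs_of_pos hc0]
  have hint3 : IntervalIntegrable G volume (1 - a) 1 := by
    apply (_root_.intervalIntegrable_const (c := c ^ p)).congr_ae
    filter_upwards [ae_restrict_of_ae hae3, self_mem_ae_restrict measurableSet_uIoc] with
      t h1 h2
    exact (h1 h2).symm
  have hval3 : ∫ t in (1 - a)..1, G t = a * c ^ p := by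
    rw [intervalIntegral.integral_congr_ae hae3, intervalIntegral.integral_const,
      smul_eq_mul]
    ring
  have hGtot : ∫ t in (0:ℝ)..1, G t = 2 * a * c ^ p := by
    have e1 := intervalIntegral.integral_add_adjacent_intervals hint1 hint2
    have e2 := intervalIntegral.integral_add_adjacent_intervals (hint1.trans hint2) hint3
    rw [← e2, ← e1, hval1, hval2, hval3]; ring
  -- the potential term
  have hFc : Continuous F := by
    have : F = fun ξ => ∫ s in (0:ℝ)..ξ, f s := funext hF
    rw [this]
    exact intervalIntegral.continuous_primitive (fun u v => hf.intervalIntegrable u v) 0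
  have hwc : Continuous w := hlip.continuous
  have hQint : ∀ u v : ℝ, 0 ≤ u → v ≤ 1 → u ≤ v →
      IntervalIntegrable (fun t => q t * F (w t)) volume u v := by
    intro u v hu hv huv
    apply ContinuousOn.intervalIntegrable
    apply ContinuousOn.mul
    · apply hqc.mono
      rw [Set.uIcc_of_le huv]
      exact Set.Icc_subset_Icc hu hv
    · exact (hFc.comp hwc).continuousOn
  have hwnn : ∀ u ∈ Set.Icc (0:ℝ) 1, 0 ≤ w u := by
    intro u hu
    apply mul_nonneg hc0.le
    exact le_min (le_min hu.1 ha0.le) (by linarith [hu.2])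
  have hqF_nonneg : ∀ u ∈ Set.Icc (0:ℝ) 1, 0 ≤ q u * F (w u) := by
    intro u hu
    exact mul_nonneg (le_trans hq₀.le (hq u hu)) (hFpos _ (hwnn u hu))
  have hI2a : 0 ≤ ∫ t in (0:ℝ)..a, q t * F (w t) :=
    intervalIntegral.integral_nonneg ha0.le fun u hu =>
      hqF_nonneg u ⟨hu.1, le_trans hu.2 ha1.le⟩
  have hI2c : 0 ≤ ∫ t in (1 - a)..1, q t * F (w t) :=
    intervalIntegral.integral_nonneg (by linarith) fun u hu =>
      hqF_nonneg u ⟨by linarith [hu.1], hu.2⟩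
  have hwmid : ∀ x ∈ Set.Icc a (1 - a), w x = ξ := by
    intro x hx
    simp only [hw_def]
    rw [min_eq_right hx.1, min_eq_left (by linarith [hx.2]), hca]
  have hI2b : q₀ * μ * F ξ ≤ ∫ t in a..(1 - a), q t * F (w t) := by
    have hmono : ∫ t in a..(1 - a), q₀ * F ξ ≤ ∫ t in a..(1 - a), q t * F (w t) := by
      apply intervalIntegral.integral_mono_on haa.le intervalIntegrable_const
        (hQint a (1 - a) ha0.le (by linarith) haa.le)
      intro x hx
      rw [hwmid x hx]
      exact mul_le_mul_of_nonneg_right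
        (hq x ⟨le_trans ha0.le hx.1, le_trans hx.2 (by linarith)⟩) hFξ0
    have hconst : ∫ t in a..(1 - a), q₀ * F ξ = μ * (q₀ * F ξ) := by
      rw [intervalIntegral.integral_const]
      have : 1 - a - a = μ := by simp only [ha_def]; ring
      rw [smul_eq_mul, this]
    rw [hconst] at hmono
    linarith [hmono]
  have hQtot : ∫ t in (0:ℝ)..1, q t * F (w t) =
      (∫ t in (0:ℝ)..a, q t * F (w t)) + (∫ t in a..(1 - a), q t * F (w t))
        + (∫ t in (1 - a)..1, q t * F (w t)) := by
    have e1 := intervalIntegral.integral_add_adjacent_intervals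
      (hQint 0 a le_rfl ha1.le ha0.le) (hQint a (1 - a) ha0.le (by linarith) haa.le)
    have e2 := intervalIntegral.integral_add_adjacent_intervals
      ((hQint 0 a le_rfl ha1.le ha0.le).trans (hQint a (1 - a) ha0.le (by linarith) haa.le))
      (hQint (1 - a) 1 (by linarith) le_rfl (by linarith))
    rw [← e2, ← e1]
  -- put together
  refine ⟨w, ⟨_, hlip⟩, hw0, hw1, ⟨{a, 1 - a}, fun t ht => ?_⟩, ?_⟩
  · simp only [Finset.mem_insert, Finset.mem_singleton] at ht
    push_neg at ht
    exact hdiff t ht.1 ht.2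
  · have hacp : a * c ^ p = ξ ^ p * a ^ (1 - p) := by
      rw [hc_def, Real.div_rpow hξ0.le ha0.le]
      rw [Real.rpow_sub ha0, Real.rpow_one]
      field_simp
    have hQlb : q₀ * μ * F ξ ≤ ∫ t in (0:ℝ)..1, q t * F (w t) := by
      rw [hQtot]; linarith
    have hE : (1 / p) * (∫ t in (0:ℝ)..1, G t) - (∫ t in (0:ℝ)..1, q t * F (w t))
        ≤ (2 / p) * (ξ ^ p * a ^ (1 - p)) - q₀ * μ * F ξ := by
      rw [hGtot, ← hacp]
      have : (1 / p) * (2 * a * c ^ p) = (2 / p) * (a * c ^ p) := by ring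
      linarith [hQlb, this]
    have hstep : (2 / p) * (ξ ^ p * a ^ (1 - p)) - q₀ * μ * F ξ < -M := by
      have h1 : q₀ * μ * (r * ξ ^ p) < q₀ * μ * F ξ :=
        mul_lt_mul_of_pos_left hFξ (mul_pos hq₀ hμ0)
      have h2 : (2 / p) * (ξ ^ p * a ^ (1 - p)) - q₀ * μ * (r * ξ ^ p) = -(ε * ξ ^ p) := by
        simp only [hε_def]; ring
      have h3 : M < ε * ξ ^ p := by
        rw [div_lt_iff₀ hε] at hξp
        linarith [hξp, mul_comm ε (ξ ^ p), mul_comm (ξ ^ p) ε]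
      calc (2 / p) * (ξ ^ p * a ^ (1 - p)) - q₀ * μ * F ξ
          < (2 / p) * (ξ ^ p * a ^ (1 - p)) - q₀ * μ * (r * ξ ^ p) := by linarith [h1]
        _ = -(ε * ξ ^ p) := h2
        _ < -M := by linarith [h3]
    calc (1 / p) * (∫ t in (0:ℝ)..1, G t) - (∫ t in (0:ℝ)..1, q t * F (w t))
        ≤ (2 / p) * (ξ ^ p * a ^ (1 - p)) - q₀ * μ * F ξ := hE
      _ < -M := hstep
end

section
/- (Ricceri-type variational principle, part 1.) Let X be a reflexive real Banach space, and let Φ, Ψ : X → ℝ be sequentially weakly lower semicontinuous (i.e., whenever xₙ converges weakly to x, liminf Φ(xₙ) ≥ Φ(x), and likewise for Ψ) and Gâteaux differentiable (at each x there is a continuous linear functional equal to all directional derivatives). Assume Ψ is strongly continuous and coercive: Ψ(x) → +∞ as ‖x‖ → +∞. For r > inf_X Ψ put φ(r) = inf over x with Ψ(x) < r of [Φ(x) - inf Φ over the weak closure of {Ψ < r}] / (r - Ψ(x)). Fix λ ∈ ℝ. If there is a real sequence rₙ → +∞ with φ(rₙ) < λ for every n, then either Φ + λΨ has a global minimum,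 or there exists a sequence (xₙ) of critical points of Φ + λΨ (points where the Gâteaux derivative of Φ + λΨ vanishes) such that Ψ(xₙ) → +∞. -/
set_option synthInstance.maxHeartbeats 1000000
set_option maxHeartbeats 1000000
set_option linter.unusedSectionVars false
open Filter Topology NormedSpace Set

section Aux
variable {X : Type*} [NormedAddCommGroup X] [NormedSpace ℝ X]

lemma flip_inj : Function.Injective ((topDualPairing ℝ X).flip) := by
  intro x y h
  rw [NormedSpace.eq_iff_forall_dual_eq ℝ]
  intro g
  have := congrArg (fun φ => φ g) h
  simpa using this

lemma weak_tendsto_iff (u : ℕ → X) (x : X) :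
    Filter.Tendsto (fun n => toWeakSpace ℝ X (u n)) Filter.atTop (nhds (toWeakSpace ℝ X x)) ↔
      ∀ L : X →L[ℝ] ℝ, Filter.Tendsto (fun n => L (u n)) Filter.atTop (nhds (L x)) := by
  refine (WeakBilin.tendsto_iff_forall_eval_tendsto (B := (topDualPairing ℝ X).flip) flip_inj).trans ?_
  constructor
  · intro h L
    exact h L
  · intro h L
    exact h L

/-- Hahn-Banach: a functional vanishing on a closed subspace, nonzero at a point outside. -/
lemma exists_dual_annihilator (Z : Submodule ℝ X) (hZc : IsClosed (Z : Set X)) (x : X)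
    (hx : x ∉ Z) : ∃ L : X →L[ℝ] ℝ, (∀ z ∈ Z, L z = 0) ∧ L x ≠ 0 := by
  obtain ⟨f, u, hfu, hux⟩ := geometric_hahn_banach_closed_point Z.convex hZc hx
  refine ⟨f, fun z hz => ?_, ?_⟩
  · by_contra hfz
    rcases lt_or_gt_of_ne hfz with hneg | hpos
    · have : f (((u + 1) / f z) • z) < u := hfu _ (Z.smul_mem _ hz)
      rw [map_smul] at this
      have hne : f z ≠ 0 := hfz
      rw [smul_eq_mul, div_mul_cancel₀ _ hne] at this
      linarith
    · have : f (((u + 1) / f z) • z) < u := hfu _ (Z.smul_mem _ hz)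
      rw [map_smul] at this
      have hne : f z ≠ 0 := hfz
      rw [smul_eq_mul, div_mul_cancel₀ _ hne] at this
      linarith
  · have h0 : f (0 : X) < u := hfu 0 Z.zero_mem
    rw [map_zero] at h0
    intro h
    rw [h] at hux
    linarith

/-- A point of the weak closure of a set contained in a ball lies in the same ball. -/
lemma weak_closure_bounded {A : Set X} {R : ℝ} (hA : ∀ a ∈ A, ‖a‖ ≤ R) (x : X)
    (hx : x ∈ toWeakSpace ℝ X ⁻¹' closure (toWeakSpace ℝ X '' A)) : ‖x‖ ≤ R := by
  by_contra hR
  push_neg at hR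
  have hAne : (toWeakSpace ℝ X '' A).Nonempty := by
    have := @closure_nonempty_iff (WeakSpace ℝ X) _ (toWeakSpace ℝ X '' A)
    exact this.mp ⟨_, hx⟩
  have hR0 : 0 ≤ R := by
    obtain ⟨w, a, ha, rfl⟩ := hAne
    exact le_trans (norm_nonneg a) (hA a ha)
  have hx0 : x ≠ 0 := by
    intro h; rw [h, norm_zero] at hR; linarith
  obtain ⟨g, hg1, hgx⟩ := exists_dual_vector ℝ x (norm_ne_zero_iff.mpr hx0)
  -- the evaluation at g is continuous on the weak space
  have hcont : Continuous fun w : WeakSpace ℝ X => ((topDualPairing ℝ X).flip) w g :=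
    WeakBilin.eval_continuous _ g
  have hopen : IsOpen {w : WeakSpace ℝ X | R < ((topDualPairing ℝ X).flip) w g} :=
    isOpen_Ioi.preimage hcont
  have hmem : (toWeakSpace ℝ X x) ∈ {w : WeakSpace ℝ X | R < ((topDualPairing ℝ X).flip) w g} := by
    show R < g x
    rw [hgx]; exact hR
  have := ((@mem_closure_iff (WeakSpace ℝ X) _ _ _).mp hx) _ hopen hmem
  obtain ⟨w, hw1, a, ha, rfl⟩ := this
  have hle : g a ≤ R := by
    calc g a ≤ |g a| := le_abs_self _
    _ = ‖g a‖ := rfl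
    _ ≤ ‖g‖ * ‖a‖ := g.le_opNorm a
    _ ≤ 1 * R := by
        rw [hg1]
        exact mul_le_mul_of_nonneg_left (hA a ha) (by norm_num)
    _ = R := one_mul R
  have : R < g a := hw1
  linarith

/-- eventual lower bound from liminf, for sequences bounded below. -/
lemma eventually_lt_liminf {f : ℕ → ℝ} {m b : ℝ} (hm : ∀ n, m ≤ f n)
    (hb : b < Filter.liminf f Filter.atTop) : ∀ᶠ n in Filter.atTop, b < f n := by
  rw [Filter.liminf_eq] at hb
  have hne : {a | ∀ᶠ n in Filter.atTop, a ≤ f n}.Nonempty :=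
    ⟨m, Filter.Eventually.of_forall hm⟩
  obtain ⟨a, ha, hba⟩ := exists_lt_of_lt_csSup hne hb
  exact ha.mono fun n hn => lt_of_lt_of_le hba hn

end Aux

section Aux2
variable {X : Type*} [NormedAddCommGroup X] [NormedSpace ℝ X]

lemma lineDeriv' (F : X → ℝ) (DF : X → (X →L[ℝ] ℝ))
    (hG : ∀ x h : X, Filter.Tendsto (fun s : ℝ => (F (x + s • h) - F x) / s)
      (nhdsWithin 0 {0}ᶜ) (nhds (DF x h)))
    (x h : X) (t₀ : ℝ) :
    HasDerivAt (fun t : ℝ => F (x + t • h)) (DF (x + t₀ • h) h) t₀ := by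
  rw [hasDerivAt_iff_tendsto_slope]
  have hmap : Tendsto (fun z : ℝ => z - t₀) (nhdsWithin t₀ {t₀}ᶜ) (nhdsWithin 0 {0}ᶜ) := by
    rw [tendsto_nhdsWithin_iff]
    constructor
    · have h1 : Tendsto (fun z : ℝ => z - t₀) (nhds t₀) (nhds (t₀ - t₀)) :=
        (continuous_id.sub continuous_const).tendsto t₀
      rw [sub_self] at h1
      exact h1.mono_left nhdsWithin_le_nhds
    · exact eventually_mem_nhdsWithin.mono fun z hz => sub_ne_zero.mpr hz
  have key := (hG (x + t₀ • h) h).comp hmap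
  apply key.congr
  intro z
  show (F (x + t₀ • h + (z - t₀) • h) - F (x + t₀ • h)) / (z - t₀) = _
  have hpt : x + t₀ • h + (z - t₀) • h = x + z • h := by
    rw [sub_smul]; abel
  rw [hpt, slope_def_field]

lemma lineCont (F : X → ℝ) (DF : X → (X →L[ℝ] ℝ))
    (hG : ∀ x h : X, Filter.Tendsto (fun s : ℝ => (F (x + s • h) - F x) / s)
      (nhdsWithin 0 {0}ᶜ) (nhds (DF x h)))
    (x h : X) : Continuous (fun t : ℝ => F (x + t • h)) := by
  rw [continuous_iff_continuousAt]
  exact fun t₀ => (lineDeriv' F DF hG x h t₀).continuousAt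

end Aux2

section Aux3
variable {X : Type*} [NormedAddCommGroup X] [NormedSpace ℝ X]

lemma exists_dual_annihilator' (Z : Submodule ℝ X) (hZc : IsClosed (Z : Set X)) (x : X)
    (hx : x ∉ Z) : ∃ L : X →L[ℝ] ℝ, (∀ z ∈ Z, L z = 0) ∧ L x ≠ 0 := by
  obtain ⟨f, u, hfu, hux⟩ := geometric_hahn_banach_closed_point Z.convex hZc hx
  refine ⟨f, fun z hz => ?_, ?_⟩
  · by_contra hfz
    have hne : f z ≠ 0 := hfz
    have : f (((u + 1) / f z) • z) < u := hfu _ (Z.smul_mem _ hz)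
    rw [map_smul, smul_eq_mul, div_mul_cancel₀ _ hne] at this
    linarith
  · have h0 : f (0 : X) < u := hfu 0 Z.zero_mem
    rw [map_zero] at h0
    intro h
    rw [h] at hux
    linarith

/-- restriction of functionals to a subspace, as a continuous linear map -/
noncomputable def restrCLM (Z : Submodule ℝ X) : (X →L[ℝ] ℝ) →L[ℝ] (↥Z →L[ℝ] ℝ) :=
  (ContinuousLinearMap.compSL ↥Z X ℝ (RingHom.id ℝ) (RingHom.id ℝ)).flip Z.subtypeL

lemma restrCLM_eq (Z : Submodule ℝ X) (L : X →L[ℝ] ℝ) :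
    restrCLM Z L = L.comp Z.subtypeL := by
  rw [restrCLM, ContinuousLinearMap.flip_apply, ContinuousLinearMap.compSL_apply]

lemma subspace_reflexive (hrefl : Function.Surjective (inclusionInDoubleDual ℝ X))
    (Z : Submodule ℝ X) (hZc : IsClosed (Z : Set X)) :
    Function.Surjective (inclusionInDoubleDual ℝ ↥Z) := by
  intro T
  obtain ⟨x, hx⟩ := hrefl (T.comp (restrCLM Z))
  have hLx : ∀ L : X →L[ℝ] ℝ, L x = T (L.comp Z.subtypeL) := by
    intro L
    have := congrArg (fun ψ => ψ L) hx
    simp only [NormedSpace.dual_def, ContinuousLinearMap.comp_apply] at this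
    rw [this, restrCLM_eq]
  have hxZ : x ∈ Z := by
    by_contra hxZ
    obtain ⟨g, hg0, hgx⟩ := exists_dual_annihilator' Z hZc x hxZ
    have hcomp : g.comp Z.subtypeL = 0 := by
      ext z; exact hg0 (z : X) z.2
    have := hLx g
    rw [hcomp, map_zero] at this
    exact hgx this
  refine ⟨⟨x, hxZ⟩, ?_⟩
  ext l
  obtain ⟨L, hLe, -⟩ := exists_extension_norm_eq Z l
  have hcomp : L.comp Z.subtypeL = l := by
    ext z; exact hLe z
  have : l ⟨x, hxZ⟩ = T l := by
    rw [← hcomp]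
    calc (L.comp Z.subtypeL) ⟨x, hxZ⟩ = L x := rfl
    _ = T (L.comp Z.subtypeL) := hLx L
  simpa [NormedSpace.dual_def] using this

lemma separable_of_dual_separable (E : Type*) [NormedAddCommGroup E] [NormedSpace ℝ E]
    (hsep : TopologicalSpace.SeparableSpace (StrongDual ℝ E)) :
    TopologicalSpace.SeparableSpace E := by
  obtain ⟨D, hDc, hDd⟩ := TopologicalSpace.exists_countable_dense (StrongDual ℝ E)
  have hsel : ∀ f : StrongDual ℝ E, ∃ x : E, ‖x‖ ≤ 1 ∧ (f ≠ 0 → ‖f‖ / 2 < f x) := by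
    intro f
    by_cases hf : f = 0
    · exact ⟨0, by simp, fun h => absurd hf h⟩
    · have hlt : ‖f‖ / 2 < ‖f‖ := by
        have : (0:ℝ) < ‖f‖ := norm_pos_iff.mpr hf
        linarith
      obtain ⟨x, hx1, hx2⟩ := f.exists_lt_apply_of_lt_opNorm hlt
      rcases le_or_gt 0 (f x) with hpos | hneg
      · refine ⟨x, le_of_lt hx1, fun _ => ?_⟩
        rwa [Real.norm_eq_abs, abs_of_nonneg hpos] at hx2
      · refine ⟨-x, by simpa using le_of_lt hx1, fun _ => ?_⟩
        rw [map_neg]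
        rwa [Real.norm_eq_abs, abs_of_neg hneg] at hx2
  choose sel hsel1 hsel2 using hsel
  set T : Set E := sel '' D with hT
  have hTc : T.Countable := hDc.image _
  set M := (Submodule.span ℝ T).topologicalClosure with hMdef
  have hMsep : TopologicalSpace.IsSeparable (M : Set E) := by
    rw [hMdef, Submodule.topologicalClosure_coe]
    exact (hTc.isSeparable.span).closure
  have hM : M = ⊤ := by
    by_contra hM
    obtain ⟨x₀, hx₀⟩ : ∃ x₀ : E, x₀ ∉ M := by
      by_contra hall
      push_neg at hall
      exact hM (Submodule.eq_top_iff'.mpr hall)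
    obtain ⟨g, hg0, hgx⟩ :=
      exists_dual_annihilator' M (Submodule.isClosed_topologicalClosure _) x₀ hx₀
    have hgne : g ≠ 0 := by
      intro h
      exact hgx (by rw [h]; rfl)
    set g' := ‖g‖⁻¹ • g with hg'
    have hgnorm : ‖g'‖ = 1 := by
      have h := norm_smul (‖g‖⁻¹) g
      rw [hg', h, norm_inv, norm_norm]
      exact inv_mul_cancel₀ (norm_ne_zero_iff.mpr hgne)
    have hg'0 : ∀ z ∈ M, g' z = 0 := by
      intro z hz
      rw [hg']
      simp [hg0 z hz]
    obtain ⟨f, hfD, hfdist⟩ : ∃ f ∈ D, dist g' f < 1/4 := by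
      have := Metric.mem_closure_iff.mp (hDd g')
      obtain ⟨f, hf1, hf2⟩ := this (1/4) (by norm_num)
      exact ⟨f, hf1, hf2⟩
    have hnorm_sub : ‖g' - f‖ < 1/4 := by rwa [← dist_eq_norm]
    have hfnorm : (3:ℝ)/4 < ‖f‖ := by
      have h1 : |‖g'‖ - ‖f‖| ≤ ‖g' - f‖ := abs_norm_sub_norm_le _ _
      rw [hgnorm] at h1
      have := abs_le.mp h1
      linarith [this.1]
    have hfne : f ≠ 0 := by
      intro h
      rw [h, norm_zero] at hfnorm
      linarith
    have h1 : ‖f‖ / 2 < f (sel f) := hsel2 f hfne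
    have hMf : sel f ∈ M := (Submodule.le_topologicalClosure _)
      (Submodule.subset_span (mem_image_of_mem _ hfD))
    have h2 : g' (sel f) = 0 := hg'0 _ hMf
    have h3 : |f (sel f)| ≤ 1/4 := by
      have heq : f (sel f) = (f - g') (sel f) := by
        rw [ContinuousLinearMap.sub_apply, h2, sub_zero]
      rw [heq]
      calc |(f - g') (sel f)| = ‖(f - g') (sel f)‖ := rfl
      _ ≤ ‖f - g'‖ * ‖sel f‖ := (f - g').le_opNorm _
      _ ≤ ‖f - g'‖ * 1 := by
          exact mul_le_mul_of_nonneg_left (hsel1 f) (norm_nonneg _)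
      _ = ‖f - g'‖ := mul_one _
      _ = ‖g' - f‖ := by rw [norm_sub_rev]
      _ ≤ 1/4 := le_of_lt hnorm_sub
    have h4 : f (sel f) ≤ |f (sel f)| := le_abs_self _
    linarith
  have huniv : TopologicalSpace.IsSeparable (univ : Set E) := by
    have htop : ((⊤ : Submodule ℝ E) : Set E) = univ := Submodule.top_coe
    rw [← htop, ← hM]
    exact hMsep
  exact TopologicalSpace.isSeparable_univ_iff.mp huniv

end Aux3

section Aux4
variable {X : Type*} [NormedAddCommGroup X] [NormedSpace ℝ X]


variable [CompleteSpace X]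

lemma weak_seq_compact (hrefl : Function.Surjective (inclusionInDoubleDual ℝ X))
    (u : ℕ → X) (R : ℝ) (hR : ∀ n, ‖u n‖ ≤ R) :
    ∃ (x : X) (φ : ℕ → ℕ), StrictMono φ ∧
      ∀ L : X →L[ℝ] ℝ, Tendsto (fun j => L (u (φ j))) atTop (nhds (L x)) := by
  set Z := (Submodule.span ℝ (Set.range u)).topologicalClosure with hZ
  have hZc : IsClosed (Z : Set X) := Submodule.isClosed_topologicalClosure _
  haveI : CompleteSpace ↥Z := hZc.completeSpace_coe
  have huZ : ∀ n, u n ∈ Z := fun n =>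
    (Submodule.le_topologicalClosure _) (Submodule.subset_span (mem_range_self n))
  set v : ℕ → ↥Z := fun n => ⟨u n, huZ n⟩ with hv
  have hvnorm : ∀ n, ‖v n‖ ≤ R := fun n => hR n
  have hR0 : 0 ≤ R := le_trans (norm_nonneg (u 0)) (hR 0)
  haveI hZsep : TopologicalSpace.SeparableSpace ↥Z := by
    have h1 : TopologicalSpace.IsSeparable (Z : Set X) := by
      rw [hZ, Submodule.topologicalClosure_coe]
      exact ((Set.countable_range u).isSeparable.span).closure
    exact h1.separableSpace
  have hreflZ := subspace_reflexive hrefl Z hZc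
  haveI hbidual : TopologicalSpace.SeparableSpace (StrongDual ℝ (StrongDual ℝ ↥Z)) :=
    (hreflZ.denseRange).separableSpace (inclusionInDoubleDual ℝ ↥Z).continuous
  haveI hdual : TopologicalSpace.SeparableSpace (StrongDual ℝ ↥Z) :=
    by have := separable_of_dual_separable (StrongDual ℝ ↥Z) hbidual; exact this
  obtain ⟨D, hDc, hDd⟩ := TopologicalSpace.exists_countable_dense (StrongDual ℝ ↥Z)
  have hDne : D.Nonempty := hDd.nonempty
  obtain ⟨l, hl⟩ := hDc.exists_eq_range hDne
  set K : Set (ℕ → ℝ) := Set.pi univ (fun k => Icc (-(‖l k‖ * R)) (‖l k‖ * R)) with hK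
  have hKc : IsCompact K := isCompact_univ_pi (fun k => isCompact_Icc)
  have hfK : ∀ n, (fun k => l k (v n)) ∈ K := by
    intro n k _
    have h1 : |l k (v n)| ≤ ‖l k‖ * ‖v n‖ := (l k).le_opNorm _
    have h2 : ‖l k‖ * ‖v n‖ ≤ ‖l k‖ * R := mul_le_mul_of_nonneg_left (hvnorm n) (norm_nonneg (l k))
    have := abs_le.mp (le_trans h1 h2)
    exact ⟨this.1, this.2⟩
  obtain ⟨g, hgK, φ, hφ, hconv⟩ := hKc.tendsto_subseq hfK
  have hcoord : ∀ k, Tendsto (fun j => l k (v (φ j))) atTop (nhds (g k)) := by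
    intro k
    have := (tendsto_pi_nhds.mp hconv) k
    exact this
  have hcauchy : ∀ l₀ : StrongDual ℝ ↥Z, ∃ cc : ℝ, Tendsto (fun j => l₀ (v (φ j))) atTop (nhds cc) := by
    intro l₀
    have hC : CauchySeq (fun j => l₀ (v (φ j))) := by
      rw [Metric.cauchySeq_iff]
      intro ε hε
      have hδ : 0 < ε / (4 * (R + 1)) := by positivity
      obtain ⟨f, hfD, hfd⟩ := (Metric.mem_closure_iff (α := StrongDual ℝ ↥Z)).mp (hDd l₀) _ hδ
      rw [hl] at hfD
      obtain ⟨k, rfl⟩ := hfD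
      have hCk : CauchySeq (fun j => l k (v (φ j))) := (hcoord k).cauchySeq
      rw [Metric.cauchySeq_iff] at hCk
      obtain ⟨N, hN⟩ := hCk (ε/2) (by positivity)
      refine ⟨N, fun m hm n hn => ?_⟩
      have hd := hN m hm n hn
      have key : ∀ j, |l₀ (v (φ j)) - l k (v (φ j))| ≤ ε/4 := by
        intro j
        have h1 : |(l₀ - l k) (v (φ j))| ≤ ‖l₀ - l k‖ * ‖v (φ j)‖ := (l₀ - l k).le_opNorm _
        have h2 : ‖l₀ - l k‖ * ‖v (φ j)‖ ≤ (ε / (4 * (R + 1))) * (R + 1) := by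
          apply mul_le_mul
          · have h5 := dist_eq_norm l₀ (l k); rw [h5] at hfd; exact le_of_lt hfd
          · linarith [hvnorm (φ j)]
          · exact norm_nonneg _
          · exact le_of_lt hδ
        have h3 : (ε / (4 * (R + 1))) * (R + 1) = ε/4 := by
          have hR1 : R + 1 ≠ 0 := by positivity
          field_simp
        have h4 : (l₀ - l k) (v (φ j)) = l₀ (v (φ j)) - l k (v (φ j)) := rfl
        calc |l₀ (v (φ j)) - l k (v (φ j))| = |(l₀ - l k) (v (φ j))| := by rw [h4]
        _ ≤ ‖l₀ - l k‖ * ‖v (φ j)‖ := h1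
        _ ≤ (ε / (4 * (R + 1))) * (R + 1) := h2
        _ = ε/4 := h3
      have habc : l₀ (v (φ m)) - l₀ (v (φ n)) =
          (l₀ (v (φ m)) - l k (v (φ m))) + (l k (v (φ m)) - l k (v (φ n)))
            + (l k (v (φ n)) - l₀ (v (φ n))) := by ring
      rw [Real.dist_eq, habc]
      have t1 := key m
      have t2 := key n
      rw [Real.dist_eq] at hd
      have t3 : |l k (v (φ n)) - l₀ (v (φ n))| ≤ ε/4 := by
        rw [abs_sub_comm]; exact t2
      calc |(l₀ (v (φ m)) - l k (v (φ m))) + (l k (v (φ m)) - l k (v (φ n)))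
            + (l k (v (φ n)) - l₀ (v (φ n)))|
          ≤ |(l₀ (v (φ m)) - l k (v (φ m))) + (l k (v (φ m)) - l k (v (φ n)))|
            + |l k (v (φ n)) - l₀ (v (φ n))| := abs_add_le _ _
        _ ≤ |l₀ (v (φ m)) - l k (v (φ m))| + |l k (v (φ m)) - l k (v (φ n))|
            + |l k (v (φ n)) - l₀ (v (φ n))| := by
            have := abs_add_le (l₀ (v (φ m)) - l k (v (φ m))) (l k (v (φ m)) - l k (v (φ n)))
            linarith
        _ < ε := by linarith
    exact cauchySeq_tendsto_of_complete hC
  choose c hc using hcauchy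
  have hadd : ∀ l₁ l₂ : StrongDual ℝ ↥Z, c (l₁ + l₂) = c l₁ + c l₂ := by
    intro l₁ l₂
    have h1 := hc (l₁ + l₂)
    have h2 := (hc l₁).add (hc l₂)
    have heq : (fun j => (l₁ + l₂) (v (φ j))) = fun j => l₁ (v (φ j)) + l₂ (v (φ j)) := by
      funext j; rfl
    rw [heq] at h1
    exact tendsto_nhds_unique h1 h2
  have hsmul : ∀ (a : ℝ) (l₁ : StrongDual ℝ ↥Z), c (a • l₁) = a * c l₁ := by
    intro a l₁
    have h1 := hc (a • l₁)
    have h2 := (hc l₁).const_mul a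
    have heq : (fun j => (a • l₁) (v (φ j))) = fun j => a * l₁ (v (φ j)) := by
      funext j; rfl
    rw [heq] at h1
    exact tendsto_nhds_unique h1 h2
  set Tlin : StrongDual ℝ ↥Z →ₗ[ℝ] ℝ :=
    { toFun := c, map_add' := hadd, map_smul' := fun a l₁ => by simpa using hsmul a l₁ }
    with hTlin
  have hbound : ∀ l₁ : StrongDual ℝ ↥Z, ‖Tlin l₁‖ ≤ R * ‖l₁‖ := by
    intro l₁
    have habs : Tendsto (fun j => |l₁ (v (φ j))|) atTop (nhds |c l₁|) := (hc l₁).abs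
    have hb : |c l₁| ≤ R * ‖l₁‖ := by
      refine le_of_tendsto habs (Eventually.of_forall fun j => ?_)
      have h1 : |l₁ (v (φ j))| ≤ ‖l₁‖ * ‖v (φ j)‖ := l₁.le_opNorm _
      have h2 : ‖l₁‖ * ‖v (φ j)‖ ≤ ‖l₁‖ * R := mul_le_mul_of_nonneg_left (hvnorm _) (norm_nonneg l₁)
      calc |l₁ (v (φ j))| ≤ ‖l₁‖ * R := le_trans h1 h2
      _ = R * ‖l₁‖ := mul_comm _ _
    exact hb
  obtain ⟨z, hz⟩ := hreflZ (LinearMap.mkContinuous Tlin R hbound)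
  have hzl : ∀ l₁ : StrongDual ℝ ↥Z, l₁ z = c l₁ := by
    intro l₁
    have h0 := congrArg (fun ψ => ψ l₁) hz
    have h1 : l₁ z = Tlin l₁ := by simpa [NormedSpace.dual_def, LinearMap.mkContinuous_apply] using h0
    exact h1
  refine ⟨(z : X), φ, hφ, fun L => ?_⟩
  have h0 : Tendsto (fun j => (restrCLM Z L) (v (φ j))) atTop (nhds (c (restrCLM Z L))) := hc _
  have heq : (fun j => (restrCLM Z L) (v (φ j))) = fun j => L (u (φ j)) := by
    funext j
    rw [restrCLM_eq]
    rfl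
  have heq2 : c (restrCLM Z L) = L (z : X) := by
    rw [← hzl, restrCLM_eq]
    rfl
  rw [heq, heq2] at h0
  exact h0

end Aux4

section Aux5
variable {X : Type*} [NormedAddCommGroup X] [NormedSpace ℝ X] [CompleteSpace X]


lemma bdd_below_on_ball (hrefl : Function.Surjective (inclusionInDoubleDual ℝ X))
    (F : X → ℝ) (DF : X → (X →L[ℝ] ℝ))
    (hG : ∀ x h : X, Filter.Tendsto (fun s : ℝ => (F (x + s • h) - F x) / s)
      (nhdsWithin 0 {0}ᶜ) (nhds (DF x h)))
    (hlsc : ∀ (u : ℕ → X) (x : X),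
      (∀ L : X →L[ℝ] ℝ, Filter.Tendsto (fun n => L (u n)) Filter.atTop (nhds (L x))) →
      F x ≤ Filter.liminf (fun n => F (u n)) Filter.atTop)
    (R : ℝ) : ∃ m : ℝ, ∀ x : X, ‖x‖ ≤ R → m ≤ F x := by
  by_contra hcon
  push_neg at hcon
  have hsel : ∀ k : ℕ, ∃ x : X, ‖x‖ ≤ R ∧ F x < -(k : ℝ) := by
    intro k
    obtain ⟨x, hx1, hx2⟩ := hcon (-(k : ℝ))
    exact ⟨x, hx1, hx2⟩
  choose w hw1 hw2 using hsel
  obtain ⟨xbar, φ, hφ, hweak⟩ := weak_seq_compact hrefl w R hw1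
  set b : ℝ := F xbar - 1 with hbdef
  set K : ℕ := Nat.ceil |b| + 1 with hKdef
  have hKb : ∀ j : ℕ, F (w (φ (j + K))) < b := by
    intro j
    have h1 : F (w (φ (j + K))) < -((φ (j + K) : ℕ) : ℝ) := hw2 _
    have h2 : (K : ℕ) ≤ φ (j + K) := le_trans (Nat.le_add_left K j) hφ.le_apply
    have h3 : (K : ℝ) ≤ ((φ (j + K) : ℕ) : ℝ) := by exact_mod_cast h2
    have h4 : |b| < (K : ℝ) := by
      rw [hKdef]
      push_cast
      have := Nat.le_ceil |b|
      linarith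
    have h5 : -b ≤ |b| := neg_le_abs b
    linarith
  have hIVT : ∀ j : ℕ, ∃ t ∈ Icc (0:ℝ) 1, F (xbar + t • (w (φ (j + K)) - xbar)) = b := by
    intro j
    have hcont : ContinuousOn (fun s : ℝ => F (xbar + s • (w (φ (j + K)) - xbar))) (Icc 0 1) :=
      (lineCont F DF hG xbar _).continuousOn
    have hIcc := intermediate_value_Icc' (le_of_lt one_pos) hcont
    have h0 : xbar + (0:ℝ) • (w (φ (j + K)) - xbar) = xbar := by
      rw [zero_smul, add_zero]
    have h1' : xbar + (1:ℝ) • (w (φ (j + K)) - xbar) = w (φ (j + K)) := by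
      rw [one_smul, add_sub_cancel]
    have hb : b ∈ Icc (F (xbar + (1:ℝ) • (w (φ (j + K)) - xbar)))
        (F (xbar + (0:ℝ) • (w (φ (j + K)) - xbar))) := by
      rw [h0, h1']
      exact ⟨le_of_lt (hKb j), by rw [hbdef]; linarith⟩
    obtain ⟨t, ht, htb⟩ := hIcc hb
    exact ⟨t, ht, htb⟩
  choose t ht1 ht2 using hIVT
  obtain ⟨tstar, htstar, ψ, hψ, htconv⟩ := isCompact_Icc.tendsto_subseq ht1
  set y : ℕ → X := fun i => xbar + t (ψ i) • (w (φ (ψ i + K)) - xbar) with hy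
  have hyweak : ∀ L : X →L[ℝ] ℝ, Tendsto (fun i => L (y i)) atTop (nhds (L xbar)) := by
    intro L
    have hsub : Tendsto (fun i : ℕ => ψ i + K) atTop atTop := by
      apply tendsto_atTop_atTop_of_monotone
      · intro a b hab
        exact Nat.add_le_add_right (hψ.le_iff_le.mpr hab) K
      · intro n
        exact ⟨n, le_trans hψ.le_apply (Nat.le_add_right _ _)⟩
    have hwL : Tendsto (fun i => L (w (φ (ψ i + K)))) atTop (nhds (L xbar)) :=
      (hweak L).comp hsub
    have hLy : ∀ i, L (y i) = L xbar + t (ψ i) * (L (w (φ (ψ i + K))) - L xbar) := by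
      intro i
      rw [hy]
      simp only [map_add, map_smul, map_sub, smul_eq_mul]
      try ring
    have hmain : Tendsto (fun i => L xbar + t (ψ i) * (L (w (φ (ψ i + K))) - L xbar)) atTop
        (nhds (L xbar + tstar * (L xbar - L xbar))) := by
      apply tendsto_const_nhds.add
      exact (htconv.mul (hwL.sub tendsto_const_nhds))
    rw [sub_self, mul_zero, add_zero] at hmain
    exact hmain.congr (fun i => (hLy i).symm)
  have hlim := hlsc y xbar hyweak
  have hFy : ∀ i, F (y i) = b := fun i => ht2 (ψ i)
  have hliminf : Filter.liminf (fun i => F (y i)) Filter.atTop = b := by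
    have : (fun i => F (y i)) = fun _ => b := funext hFy
    rw [this]
    exact Filter.liminf_const b
  rw [hliminf, hbdef] at hlim
  linarith

end Aux5

section Aux6
variable {X : Type*} [NormedAddCommGroup X] [NormedSpace ℝ X] [CompleteSpace X]


theorem ricceri_step
    (hrefl : Function.Surjective (NormedSpace.inclusionInDoubleDual ℝ X))
    (Φ Ψ : X → ℝ) (DΦ DΨ : X → (X →L[ℝ] ℝ))
    (hΦG : ∀ x h : X, Filter.Tendsto (fun s : ℝ => (Φ (x + s • h) - Φ x) / s)
      (nhdsWithin 0 {0}ᶜ) (nhds (DΦ x h)))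
    (hΨG : ∀ x h : X, Filter.Tendsto (fun s : ℝ => (Ψ (x + s • h) - Ψ x) / s)
      (nhdsWithin 0 {0}ᶜ) (nhds (DΨ x h)))
    (hΦlsc : ∀ (u : ℕ → X) (x : X),
      (∀ L : X →L[ℝ] ℝ, Filter.Tendsto (fun n => L (u n)) Filter.atTop (nhds (L x))) →
      Φ x ≤ Filter.liminf (fun n => Φ (u n)) Filter.atTop)
    (hΨlsc : ∀ (u : ℕ → X) (x : X),
      (∀ L : X →L[ℝ] ℝ, Filter.Tendsto (fun n => L (u n)) Filter.atTop (nhds (L x))) →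
      Ψ x ≤ Filter.liminf (fun n => Ψ (u n)) Filter.atTop)
    (hΨcont : Continuous Ψ)
    (hΨcoer : ∀ M : ℝ, ∃ R : ℝ, ∀ x : X, R ≤ ‖x‖ → M ≤ Ψ x)
    (lam : ℝ) (ρ : ℝ)
    (hρ : sInf (Set.range Ψ) < ρ)
    (hφρ : sInf ((fun x : X =>
      (Φ x - sInf (Φ '' (toWeakSpace ℝ X ⁻¹'
        closure (toWeakSpace ℝ X '' {y : X | Ψ y < ρ})))) / (ρ - Ψ x)) '' {x : X | Ψ x < ρ})
      < lam) :
    ∃ xh : X, (DΦ xh + lam • DΨ xh = 0) ∧ Ψ xh < ρ ∧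
      ∀ y : X, Ψ y < ρ → Φ xh + lam * Ψ xh ≤ Φ y + lam * Ψ y := by
  classical
  set S : Set X := {x : X | Ψ x < ρ} with hSdef
  have hSne : S.Nonempty := by
    by_cases hbdd : BddBelow (Set.range Ψ)
    · have hne : (Set.range Ψ).Nonempty := ⟨Ψ 0, mem_range_self 0⟩
      obtain ⟨yv, hyv, hylt⟩ := exists_lt_of_csInf_lt hne hρ
      obtain ⟨x₀, rfl⟩ := hyv
      exact ⟨x₀, hylt⟩
    · rw [not_bddBelow_iff] at hbdd
      obtain ⟨yv, hyv, hylt⟩ := hbdd ρ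
      obtain ⟨x₀, rfl⟩ := hyv
      exact ⟨x₀, hylt⟩
  obtain ⟨R₀, hR₀⟩ := hΨcoer ρ
  set R : ℝ := max R₀ 0 with hRdef
  have hR0 : (0:ℝ) ≤ R := le_max_right _ _
  have hSball : ∀ x ∈ S, ‖x‖ ≤ R := by
    intro x hx
    by_contra hc
    push_neg at hc
    have h1 : R₀ ≤ ‖x‖ := le_trans (le_max_left _ _) (le_of_lt hc)
    have h2 : ρ ≤ Ψ x := hR₀ x h1
    have h3 : Ψ x < ρ := hx
    linarith
  set C : Set X := toWeakSpace ℝ X ⁻¹' (@closure (WeakSpace ℝ X) _ (toWeakSpace ℝ X '' S)) with hCdef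
  have hSC : S ⊆ C := by
    intro x hx
    exact @subset_closure (WeakSpace ℝ X) _ (toWeakSpace ℝ X '' S)
      (toWeakSpace ℝ X x) (mem_image_of_mem _ hx)
  have hCball : ∀ x ∈ C, ‖x‖ ≤ R := fun x hx => weak_closure_bounded hSball x hx
  have hCne : C.Nonempty := hSne.mono hSC
  obtain ⟨mΦ, hmΦ⟩ := bdd_below_on_ball hrefl Φ DΦ hΦG hΦlsc R
  obtain ⟨mΨ, hmΨ⟩ := bdd_below_on_ball hrefl Ψ DΨ hΨG hΨlsc R
  set m : ℝ := sInf (Φ '' C) with hmdef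
  have hΦCbdd : BddBelow (Φ '' C) := by
    refine ⟨mΦ, fun a ha => ?_⟩
    obtain ⟨y, hyC, rfl⟩ := ha
    exact hmΦ y (hCball y hyC)
  have hmle : ∀ x ∈ C, m ≤ Φ x := fun x hx => csInf_le hΦCbdd (mem_image_of_mem Φ hx)
  -- positivity of lam
  set T : Set ℝ := (fun x : X => (Φ x - m) / (ρ - Ψ x)) '' S with hTdef
  have hTne : T.Nonempty := hSne.image _
  have hTnonneg : ∀ a ∈ T, 0 ≤ a := by
    intro a ha
    obtain ⟨x, hxS, rfl⟩ := ha
    have h1 : 0 ≤ Φ x - m := sub_nonneg.mpr (hmle x (hSC hxS))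
    have h2 : 0 < ρ - Ψ x := sub_pos.mpr hxS
    exact div_nonneg h1 (le_of_lt h2)
  have lam_pos : 0 < lam := lt_of_le_of_lt (le_csInf hTne hTnonneg) hφρ
  -- the comparison point x₀
  obtain ⟨a₀, ha₀T, ha₀lt⟩ := exists_lt_of_csInf_lt hTne hφρ
  obtain ⟨x₀, hx₀S, rfl⟩ := ha₀T
  have hdenom : 0 < ρ - Ψ x₀ := sub_pos.mpr hx₀S
  have hkey : Φ x₀ + lam * Ψ x₀ < m + lam * ρ := by
    have h1 : Φ x₀ - m < lam * (ρ - Ψ x₀) := (div_lt_iff₀ hdenom).mp ha₀lt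
    nlinarith
  -- minimize J over C
  set J : X → ℝ := fun x => Φ x + lam * Ψ x with hJdef
  have hJlb : ∀ x ∈ C, mΦ + lam * mΨ ≤ J x := by
    intro x hx
    have h1 : mΦ ≤ Φ x := hmΦ x (hCball x hx)
    have h2 : lam * mΨ ≤ lam * Ψ x :=
      mul_le_mul_of_nonneg_left (hmΨ x (hCball x hx)) (le_of_lt lam_pos)
    simp only [hJdef]
    linarith
  have hJbdd : BddBelow (J '' C) := by
    refine ⟨mΦ + lam * mΨ, fun a ha => ?_⟩
    obtain ⟨y, hyC, rfl⟩ := ha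
    exact hJlb y hyC
  have hJne : (J '' C).Nonempty := hCne.image _
  set μ : ℝ := sInf (J '' C) with hμdef
  have hμle : ∀ x ∈ C, μ ≤ J x := fun x hx => csInf_le hJbdd (mem_image_of_mem J hx)
  have hms : ∀ k : ℕ, ∃ x, x ∈ C ∧ J x < μ + 1 / ((k : ℝ) + 1) := by
    intro k
    have hpos : 0 < 1 / ((k : ℝ) + 1) := by positivity
    obtain ⟨a, haJ, halt⟩ := exists_lt_of_csInf_lt hJne (lt_add_of_pos_right μ hpos)
    obtain ⟨x, hxC, rfl⟩ := haJ
    exact ⟨x, hxC, halt⟩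
  choose q hqC hqlt using hms
  obtain ⟨xh, φ, hφm, hweak⟩ := weak_seq_compact hrefl q R (fun k => hCball _ (hqC k))
  have hxhC : xh ∈ C := by
    have htd : Tendsto (fun k => toWeakSpace ℝ X (q (φ k))) atTop
        (nhds (toWeakSpace ℝ X xh)) :=
      (weak_tendsto_iff _ _).mpr (fun L => hweak L)
    have hcl : IsClosed (@closure (WeakSpace ℝ X) _
        (toWeakSpace ℝ X '' S)) := @isClosed_closure (WeakSpace ℝ X) _ (toWeakSpace ℝ X '' S)
    exact hcl.mem_of_tendsto htd (Eventually.of_forall fun k => hqC (φ k))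
  -- J xh ≤ μ
  have hJtend : Tendsto (fun k => J (q (φ k))) atTop (nhds μ) := by
    have hub : ∀ k : ℕ, J (q (φ k)) ≤ μ + 1 / ((k : ℝ) + 1) := by
      intro k
      have h1 : J (q (φ k)) < μ + 1 / ((φ k : ℝ) + 1) := hqlt (φ k)
      have h2 : 1 / ((φ k : ℝ) + 1) ≤ 1 / ((k : ℝ) + 1) := by
        apply one_div_le_one_div_of_le
        · positivity
        · have h3 : k ≤ φ k := hφm.le_apply
          have h4 : (k : ℝ) ≤ (φ k : ℝ) := by exact_mod_cast h3
          linarith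
      linarith
    have hlb : ∀ k : ℕ, μ ≤ J (q (φ k)) := fun k => hμle _ (hqC (φ k))
    have htop : Tendsto (fun k : ℕ => μ + 1 / ((k : ℝ) + 1)) atTop (nhds (μ + 0)) :=
      tendsto_const_nhds.add tendsto_one_div_add_atTop_nhds_zero_nat
    rw [add_zero] at htop
    exact tendsto_of_tendsto_of_tendsto_of_le_of_le tendsto_const_nhds htop hlb hub
  have hJxh : J xh ≤ μ := by
    have hΦlim : Φ xh ≤ Filter.liminf (fun k => Φ (q (φ k))) Filter.atTop :=
      hΦlsc (fun k => q (φ k)) xh hweak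
    have hΨlim : Ψ xh ≤ Filter.liminf (fun k => Ψ (q (φ k))) Filter.atTop :=
      hΨlsc (fun k => q (φ k)) xh hweak
    set la : ℝ := Filter.liminf (fun k => Φ (q (φ k))) Filter.atTop with hladef
    set lb : ℝ := Filter.liminf (fun k => Ψ (q (φ k))) Filter.atTop with hlbdef
    have key : ∀ δ : ℝ, 0 < δ → la + lam * lb ≤ μ + δ + lam * δ := by
      intro δ hδ
      have h1 : ∀ᶠ k in atTop, la - δ < Φ (q (φ k)) :=
        eventually_lt_liminf (fun k => hmΦ _ (hCball _ (hqC (φ k)))) (by linarith)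
      have h2 : ∀ᶠ k in atTop, lb - δ < Ψ (q (φ k)) :=
        eventually_lt_liminf (fun k => hmΨ _ (hCball _ (hqC (φ k)))) (by linarith)
      have h3 : ∀ᶠ k in atTop, (la - δ) + lam * (lb - δ) ≤ J (q (φ k)) := by
        filter_upwards [h1, h2] with k hk1 hk2
        have : lam * (lb - δ) ≤ lam * Ψ (q (φ k)) :=
          mul_le_mul_of_nonneg_left (le_of_lt hk2) (le_of_lt lam_pos)
        simp only [hJdef]
        linarith
      have h4 : (la - δ) + lam * (lb - δ) ≤ μ := ge_of_tendsto hJtend h3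
      nlinarith
    have key2 : la + lam * lb ≤ μ := by
      by_contra hc
      push_neg at hc
      set δ := (la + lam * lb - μ) / (2 * (1 + lam)) with hδdef
      have hδpos : 0 < δ := by
        apply div_pos
        · linarith
        · linarith
      have := key δ hδpos
      have hexp : μ + δ + lam * δ = μ + (1 + lam) * δ := by ring
      rw [hexp] at this
      have hd2 : (1 + lam) * δ = (la + lam * lb - μ) / 2 := by
        rw [hδdef]
        field_simp
      rw [hd2] at this
      linarith
    have h5 : lam * Ψ xh ≤ lam * lb := mul_le_mul_of_nonneg_left hΨlim (le_of_lt lam_pos)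
    simp only [hJdef]
    linarith
  have hmin : ∀ y ∈ C, J xh ≤ J y := fun y hy => le_trans hJxh (hμle y hy)
  -- Ψ xh < ρ
  have hΨxh : Ψ xh < ρ := by
    by_contra hge
    push_neg at hge
    have h1 : m ≤ Φ xh := hmle xh hxhC
    have h2 : lam * ρ ≤ lam * Ψ xh := mul_le_mul_of_nonneg_left hge (le_of_lt lam_pos)
    have h4 : J xh ≤ J x₀ := hmin x₀ (hSC hx₀S)
    simp only [hJdef] at h4
    linarith
  -- criticality
  have hcrit : ∀ h : X, DΦ xh h + lam * DΨ xh h = 0 := by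
    intro h
    have hd : HasDerivAt (fun s : ℝ => Φ (xh + s • h) + lam * Ψ (xh + s • h))
        (DΦ (xh + (0:ℝ) • h) h + lam * DΨ (xh + (0:ℝ) • h) h) 0 :=
      (lineDeriv' Φ DΦ hΦG xh h 0).add ((lineDeriv' Ψ DΨ hΨG xh h 0).const_mul lam)
    have he : xh + (0:ℝ) • h = xh := by rw [zero_smul, add_zero]
    rw [he] at hd
    have hcontΨ : Continuous (fun s : ℝ => Ψ (xh + s • h)) :=
      hΨcont.comp (continuous_const.add (continuous_id.smul continuous_const))
    have hnbhd : {s : ℝ | Ψ (xh + s • h) < ρ} ∈ nhds (0 : ℝ) := by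
      have hopen : IsOpen {s : ℝ | Ψ (xh + s • h) < ρ} :=
        isOpen_Iio.preimage hcontΨ
      apply hopen.mem_nhds
      show Ψ (xh + (0:ℝ) • h) < ρ
      rw [he]
      exact hΨxh
    have hloc : IsLocalMin (fun s : ℝ => Φ (xh + s • h) + lam * Ψ (xh + s • h)) 0 := by
      filter_upwards [hnbhd] with s hs
      have hsS : (xh + s • h) ∈ S := hs
      have := hmin _ (hSC hsS)
      simp only [hJdef] at this
      show Φ (xh + (0:ℝ) • h) + lam * Ψ (xh + (0:ℝ) • h) ≤ Φ (xh + s • h) + lam * Ψ (xh + s • h)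
      rw [he]
      exact this
    exact hloc.hasDerivAt_eq_zero hd
  refine ⟨xh, ?_, hΨxh, fun y hy => hmin y (hSC hy)⟩
  ext h
  simp only [ContinuousLinearMap.add_apply, ContinuousLinearMap.coe_smul', Pi.smul_apply,
    smul_eq_mul, ContinuousLinearMap.zero_apply]
  exact hcrit h

end Aux6

/-- Ricceri-type variational principle, part 1. `X` is a reflexive real
Banach space (reflexivity expressed as surjectivity of the canonical inclusion into the
double dual); `Φ, Ψ : X → ℝ` are sequentially weakly lower semicontinuous and Gâteaux
differentiable with Gâteaux derivatives `DΦ, DΨ`; `Ψ` is continuous and coercive. With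
`φ(r) = inf_{Ψ(x)<r} (Φ(x) - inf_{weak closure of {Ψ<r}} Φ)/(r - Ψ(x))`, if `rₙ → +∞`
and `φ(rₙ) < λ` for all `n`, then either `Φ + λΨ` has a global minimum, or there is a
sequence of critical points `xₙ` of `Φ + λΨ` with `Ψ(xₙ) → +∞`. -/
theorem stmt_14 (X : Type*) [NormedAddCommGroup X] [NormedSpace ℝ X] [CompleteSpace X]
    (hrefl : Function.Surjective (NormedSpace.inclusionInDoubleDual ℝ X))
    (Φ Ψ : X → ℝ) (DΦ DΨ : X → (X →L[ℝ] ℝ))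
    (hΦG : ∀ x h : X, Filter.Tendsto (fun s : ℝ => (Φ (x + s • h) - Φ x) / s)
      (nhdsWithin 0 {0}ᶜ) (nhds (DΦ x h)))
    (hΨG : ∀ x h : X, Filter.Tendsto (fun s : ℝ => (Ψ (x + s • h) - Ψ x) / s)
      (nhdsWithin 0 {0}ᶜ) (nhds (DΨ x h)))
    (hΦlsc : ∀ (u : ℕ → X) (x : X),
      (∀ L : X →L[ℝ] ℝ, Filter.Tendsto (fun n => L (u n)) Filter.atTop (nhds (L x))) →
      Φ x ≤ Filter.liminf (fun n => Φ (u n)) Filter.atTop)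
    (hΨlsc : ∀ (u : ℕ → X) (x : X),
      (∀ L : X →L[ℝ] ℝ, Filter.Tendsto (fun n => L (u n)) Filter.atTop (nhds (L x))) →
      Ψ x ≤ Filter.liminf (fun n => Ψ (u n)) Filter.atTop)
    (hΨcont : Continuous Ψ)
    (hΨcoer : ∀ M : ℝ, ∃ R : ℝ, ∀ x : X, R ≤ ‖x‖ → M ≤ Ψ x)
    (lam : ℝ) (φ : ℝ → ℝ)
    (hφ : ∀ r : ℝ, φ r = sInf ((fun x : X =>
      (Φ x - sInf (Φ '' (toWeakSpace ℝ X ⁻¹'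
        closure (toWeakSpace ℝ X '' {y : X | Ψ y < r})))) / (r - Ψ x)) '' {x : X | Ψ x < r}))
    (r : ℕ → ℝ)
    (hrinf : ∀ n, sInf (Set.range Ψ) < r n)
    (hrtop : Filter.Tendsto r Filter.atTop Filter.atTop)
    (hφr : ∀ n, φ (r n) < lam) :
    (∃ x : X, ∀ y : X, Φ x + lam * Ψ x ≤ Φ y + lam * Ψ y) ∨
    (∃ u : ℕ → X, (∀ n, DΦ (u n) + lam • DΨ (u n) = 0) ∧
      Filter.Tendsto (fun n => Ψ (u n)) Filter.atTop Filter.atTop) := by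
  classical
  have step : ∀ n : ℕ, ∃ xh : X, (DΦ xh + lam • DΨ xh = 0) ∧ Ψ xh < r n ∧
      ∀ y : X, Ψ y < r n → Φ xh + lam * Ψ xh ≤ Φ y + lam * Ψ y := by
    intro n
    apply ricceri_step hrefl Φ Ψ DΦ DΨ hΦG hΨG hΦlsc hΨlsc hΨcont hΨcoer lam (r n) (hrinf n)
    have h0 := hφr n
    rw [hφ (r n)] at h0
    exact h0
  choose xh hcrit hΨlt hminn using step
  by_cases hbd : ∃ M : ℝ, ∀ n, Ψ (xh n) ≤ M
  · left
    obtain ⟨M, hM⟩ := hbd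
    obtain ⟨m', hm'⟩ := (hrtop.eventually_gt_atTop M).exists
    refine ⟨xh m', fun y => ?_⟩
    obtain ⟨n', hn'⟩ := (hrtop.eventually_gt_atTop (Ψ y)).exists
    exact le_trans (hminn m' _ (lt_of_le_of_lt (hM n') hm')) (hminn n' y hn')
  · right
    push_neg at hbd
    have hsel : ∀ k : ℕ, ∃ n : ℕ, (k : ℝ) < Ψ (xh n) := by
      intro k
      obtain ⟨n, hn⟩ := hbd (k : ℝ)
      exact ⟨n, hn⟩
    choose nn hnn using hsel
    refine ⟨fun k => xh (nn k), fun k => hcrit _, ?_⟩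
    exact tendsto_atTop_mono (fun k => (hnn k).le) tendsto_natCast_atTop_atTop
end
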